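/- If a cubic plane graph G contains a quadrilateral face, then G is 4-face-colorable whenever the smaller cubic plane graph obtained by deleting the quadrilateral (replacing it by a crossing-free joining of the four boundary edges) is 4-face-colorable; however, not every 4-face-coloring of the reduced graph extends directly — in general one must first modify the coloring by interchanging two colors on a maximal connected two-colored region (a Kempe switch). -/

import Mathlib

/-!
A combinatorial map (rotation system): darts `D`, vertex rotation `σ`,
edge involution `α` (fixed-point free).  Vertices are the cycles of `σ`,
edges the cycles of `α`, and faces the cycles of `φ = σ * α`.
Planarity of a connected map is expressed by Euler's formula `V + F = E + 2`.
-/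

structure CombMap where
  D : Type
  [fin : Fintype D]
  [deq : DecidableEq D]
  σ : Equiv.Perm D
  α : Equiv.Perm D
  α_invol : ∀ d, α (α d) = d
  α_fpf : ∀ d, α d ≠ d

attribute [instance] CombMap.fin CombMap.deq

namespace CombMap

variable (M : CombMap)

/-- The face permutation. -/
def φ : Equiv.Perm M.D := M.σ * M.α

/-- Every vertex is trivalent. -/
def Cubic : Prop := (∀ d, M.σ (M.σ (M.σ d)) = d) ∧ ∀ d, M.σ d ≠ d

/-- The map is connected. -/
def Connected : Prop :=
  ∀ d e : M.D, Relation.ReflTransGen (fun x y => M.σ x = y ∨ M.α x = y) d e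

def sameCycleSetoid (f : Equiv.Perm M.D) : Setoid M.D where
  r := f.SameCycle
  iseqv := ⟨fun x => Equiv.Perm.SameCycle.refl f x, fun h => h.symm, fun h h' => h.trans h'⟩

/-- The number of cycles (orbits) of a permutation of the darts. -/
noncomputable def numCycles (f : Equiv.Perm M.D) : ℕ := Nat.card (Quotient (M.sameCycleSetoid f))

/-- A connected map is planar iff Euler's formula `V - E + F = 2` holds. -/
def Planar : Prop :=
  M.Connected ∧ M.numCycles M.σ + M.numCycles M.φ = M.numCycles M.α + 2

/-- No edge has the same face on both of its sides (for a plane graph this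
is equivalent to having no bridge). -/
def Bridgeless : Prop := ∀ d, ¬ M.φ.SameCycle d (M.α d)

/-- A proper `n`-face-coloring, encoded as a function on darts that is
constant on faces and assigns different colors to the two sides of each edge. -/
def FaceColoring (n : ℕ) (c : M.D → Fin n) : Prop :=
  (∀ d, c (M.φ d) = c d) ∧ ∀ d, c d ≠ c (M.α d)

/-- A proper `n`-edge-coloring, encoded as a function on darts that is
constant on edges and assigns different colors to distinct edges at a vertex. -/
def EdgeColoring (n : ℕ) (c : M.D → Fin n) : Prop :=
  (∀ d, c (M.α d) = c d) ∧ ∀ d, c d ≠ c (M.σ d)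

end CombMap



set_option linter.unusedSectionVars false

namespace QuadRed

open Equiv Equiv.Perm

variable {D : Type*} [Fintype D] [DecidableEq D]

def scs (f : Perm D) : Setoid D :=
  ⟨f.SameCycle, ⟨fun x => Equiv.Perm.SameCycle.refl f x, fun h => h.symm, fun h h' => h.trans h'⟩⟩

noncomputable def ncyc (f : Perm D) : ℕ := Nat.card (Quotient (scs f))

lemma sc_pow {f : Perm D} {x y : D} : f.SameCycle x y ↔ ∃ n : ℕ, (f ^ n) x = y := by
  constructor
  · intro h
    obtain ⟨i, _, hi⟩ := h.exists_pow_eq'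
    exact ⟨i, hi⟩
  · rintro ⟨n, rfl⟩
    exact ⟨(n : ℤ), by simp⟩

lemma sc_one {x y : D} : (1 : Perm D).SameCycle x y ↔ x = y := by
  rw [sc_pow]
  constructor
  · rintro ⟨n, rfl⟩; simp
  · rintro rfl; exact ⟨0, rfl⟩

lemma sc_apply_self {f : Perm D} (x : D) : f.SameCycle x (f x) := ⟨1, by simp⟩

lemma ncyc_one : ncyc (1 : Perm D) = Fintype.card D := by
  have hb : Function.Bijective (fun x : D => (Quotient.mk (scs 1) x)) := by
    constructor
    · intro x y h
      exact sc_one.mp (Quotient.exact h)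
    · exact fun q => Quotient.exists_rep q
  rw [ncyc, ← Nat.card_eq_of_bijective _ hb, Nat.card_eq_fintype_card]

lemma ncyc_lt {f : Perm D} {a : D} (ha : f a ≠ a) : ncyc f < Fintype.card D := by
  classical
  have : Fintype.card (Quotient (scs f)) < Fintype.card D :=
    Fintype.card_lt_of_surjective_not_injective (Quotient.mk (scs f)) Quotient.mk_surjective
      (fun hi => ha (hi (Quotient.sound (sc_apply_self a))).symm)
  rwa [ncyc, Nat.card_eq_fintype_card]

lemma pow_agree {f g : Perm D} {x : D} {n : ℕ} (h : ∀ i < n, g ((f ^ i) x) = f ((f ^ i) x)) :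
    (g ^ n) x = (f ^ n) x := by
  induction n with
  | zero => rfl
  | succ n ih =>
    have hn : ∀ i < n, g ((f ^ i) x) = f ((f ^ i) x) := fun i hi => h i (Nat.lt_succ_of_lt hi)
    rw [pow_succ', pow_succ', mul_apply, mul_apply, ih hn, h n (Nat.lt_succ_self n)]

lemma swap_mul_apply {f : Perm D} {a b x : D} :
    (Equiv.swap a b * f) x = if f x = a then b else if f x = b then a else f x := by
  simp [mul_apply, Equiv.swap_apply_def]

end QuadRed
section
open Equiv Equiv.Perm
namespace QuadRed
variable {D : Type*} [Fintype D] [DecidableEq D]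

lemma pow_succ_apply (f : Perm D) (n : ℕ) (x : D) : (f ^ (n+1)) x = f ((f ^ n) x) := by
  rw [pow_succ', mul_apply]

section Split

variable {f : Perm D} {a b : D}

lemma sc_step (hsc : f.SameCycle a b) (z : D) :
    f.SameCycle z ((Equiv.swap a b * f) z) := by
  rw [swap_mul_apply]
  split_ifs with h1 h2
  · exact (h1 ▸ sc_apply_self z).trans hsc
  · exact (h2 ▸ sc_apply_self z).trans hsc.symm
  · exact sc_apply_self z

lemma sc_refine (hsc : f.SameCycle a b) {x y : D}
    (h : (Equiv.swap a b * f).SameCycle x y) : f.SameCycle x y := by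
  obtain ⟨n, rfl⟩ := sc_pow.mp h
  clear h
  induction n with
  | zero => exact Equiv.Perm.SameCycle.refl f x
  | succ n ih =>
    rw [pow_succ_apply]
    exact ih.trans (sc_step hsc _)

private lemma exFind (hab : a ≠ b) (hsc : f.SameCycle a b) : ∃ n, 0 < n ∧ (f ^ n) a = b := by
  obtain ⟨n, hn⟩ := sc_pow.mp hsc
  rcases Nat.eq_zero_or_pos n with h | h
  · exact absurd (by simpa [h] using hn) hab
  · exact ⟨n, h, hn⟩

open Classical in
private noncomputable def mm (hab : a ≠ b) (hsc : f.SameCycle a b) : ℕ :=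
  Nat.find (exFind hab hsc)

open Classical in
private lemma mm_pos (hab : a ≠ b) (hsc : f.SameCycle a b) : 0 < mm hab hsc :=
  (Nat.find_spec (exFind hab hsc)).1

open Classical in
private lemma mm_spec (hab : a ≠ b) (hsc : f.SameCycle a b) : (f ^ (mm hab hsc)) a = b :=
  (Nat.find_spec (exFind hab hsc)).2

open Classical in
private lemma mm_min (hab : a ≠ b) (hsc : f.SameCycle a b) {i : ℕ} (h1 : 0 < i)
    (h2 : i < mm hab hsc) : (f ^ i) a ≠ b :=
  fun he => Nat.find_min (exFind hab hsc) h2 ⟨h1, he⟩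

private lemma key1 (hab : a ≠ b) (hsc : f.SameCycle a b) {i : ℕ} (h1 : 0 < i)
    (h2 : i < mm hab hsc) : (f ^ i) a ≠ a ∧ (f ^ i) a ≠ b := by
  refine ⟨fun he => ?_, mm_min hab hsc h1 h2⟩
  have hmi : (f ^ (mm hab hsc - i)) ((f ^ i) a) = b := by
    rw [← mul_apply, ← pow_add, Nat.sub_add_cancel h2.le, mm_spec hab hsc]
  rw [he] at hmi
  have h3 : 0 < mm hab hsc - i := Nat.sub_pos_of_lt h2
  have h4 : mm hab hsc - i < mm hab hsc := Nat.sub_lt (lt_trans h1 h2) h1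
  exact mm_min hab hsc h3 h4 hmi

private lemma orbitInv (hab : a ≠ b) (hsc : f.SameCycle a b) (n : ℕ) :
    ∃ i, i < mm hab hsc ∧ ((Equiv.swap a b * f) ^ n) a = (f ^ i) a := by
  induction n with
  | zero => exact ⟨0, mm_pos hab hsc, rfl⟩
  | succ n ih =>
    obtain ⟨i, hi, hz⟩ := ih
    rw [pow_succ_apply, hz, swap_mul_apply]
    have hfz : f ((f ^ i) a) = (f ^ (i+1)) a := (pow_succ_apply f i a).symm
    rcases Nat.lt_or_ge (i+1) (mm hab hsc) with hlt | hge
    · have hk := key1 hab hsc (Nat.succ_pos i) hlt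
      rw [hfz, if_neg hk.1, if_neg hk.2]
      exact ⟨i+1, hlt, rfl⟩
    · have hieq : i + 1 = mm hab hsc := le_antisymm hi hge
      rw [hfz, hieq, mm_spec hab hsc, if_neg hab.symm, if_pos rfl]
      exact ⟨0, mm_pos hab hsc, rfl⟩

lemma split_not_sc (hab : a ≠ b) (hsc : f.SameCycle a b) :
    ¬ (Equiv.swap a b * f).SameCycle a b := by
  intro h
  obtain ⟨n, hn⟩ := sc_pow.mp h
  obtain ⟨i, hi, hz⟩ := orbitInv hab hsc n
  rw [hn] at hz
  rcases Nat.eq_zero_or_pos i with h0 | h0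
  · exact hab (by simpa [h0] using hz.symm)
  · exact mm_min hab hsc h0 hi hz.symm

private lemma split_cover_aux (hab : a ≠ b) (hsc : f.SameCycle a b) (n : ℕ) :
    (Equiv.swap a b * f).SameCycle a ((f ^ n) a) ∨
      (Equiv.swap a b * f).SameCycle b ((f ^ n) a) := by
  induction n with
  | zero => exact Or.inl (Equiv.Perm.SameCycle.refl _ a)
  | succ n ih =>
    have hstep : (f ^ (n+1)) a = f ((f ^ n) a) := pow_succ_apply f n a
    by_cases h1 : f ((f ^ n) a) = a
    · left; rw [hstep, h1]
    by_cases h2 : f ((f ^ n) a) = b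
    · right; rw [hstep, h2]
    · have hh : (Equiv.swap a b * f) ((f ^ n) a) = (f ^ (n+1)) a := by
        rw [swap_mul_apply, if_neg h1, if_neg h2, hstep]
      rcases ih with h | h
      · exact Or.inl (h.trans (hh ▸ sc_apply_self _))
      · exact Or.inr (h.trans (hh ▸ sc_apply_self _))

lemma split_cover (hab : a ≠ b) (hsc : f.SameCycle a b) {x : D} (hx : f.SameCycle x a) :
    (Equiv.swap a b * f).SameCycle a x ∨ (Equiv.swap a b * f).SameCycle b x := by
  obtain ⟨n, rfl⟩ := sc_pow.mp hx.symm
  exact split_cover_aux hab hsc n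

lemma split_off (hsc : f.SameCycle a b) {x : D} (hxa : ¬ f.SameCycle x a) (n : ℕ) :
    ((Equiv.swap a b * f) ^ n) x = (f ^ n) x := by
  apply pow_agree
  intro i _
  rw [swap_mul_apply]
  have hsc1 : f.SameCycle x (f ((f ^ i) x)) := sc_pow.mpr ⟨i+1, (pow_succ_apply f i x)⟩
  have h1 : f ((f ^ i) x) ≠ a := fun he => hxa (he ▸ hsc1)
  have h2 : f ((f ^ i) x) ≠ b := fun he => hxa ((he ▸ hsc1).trans hsc.symm)
  rw [if_neg h1, if_neg h2]

lemma split_off_iff (hsc : f.SameCycle a b) {x y : D} (hxa : ¬ f.SameCycle x a) :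
    (Equiv.swap a b * f).SameCycle x y ↔ f.SameCycle x y := by
  constructor
  · exact sc_refine hsc
  · intro h
    obtain ⟨n, rfl⟩ := sc_pow.mp h
    exact sc_pow.mpr ⟨n, split_off hsc hxa n⟩

open Classical in
lemma split_ncyc (hab : a ≠ b) (hsc : f.SameCycle a b) :
    ncyc (Equiv.swap a b * f) = ncyc f + 1 := by
  set h : Perm D := Equiv.swap a b * f with hh
  have wd : ∀ x y : D, h.SameCycle x y →
      (if h.SameCycle x b then (Sum.inr PUnit.unit : Quotient (scs f) ⊕ PUnit.{1})
        else Sum.inl (Quotient.mk (scs f) x)) =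
      (if h.SameCycle y b then (Sum.inr PUnit.unit : Quotient (scs f) ⊕ PUnit.{1})
        else Sum.inl (Quotient.mk (scs f) y)) := by
    intro x y hxy
    by_cases hxb : h.SameCycle x b
    · rw [if_pos hxb, if_pos (hxy.symm.trans hxb)]
    · have hyb : ¬ h.SameCycle y b := fun hyb => hxb (hxy.trans hyb)
      rw [if_neg hxb, if_neg hyb]
      exact congrArg Sum.inl (Quotient.sound (sc_refine hsc hxy))
  let F : Quotient (scs h) → Quotient (scs f) ⊕ PUnit := Quotient.lift _ (fun x y hxy => wd x y hxy)
  have hbij : Function.Bijective F := by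
    constructor
    · intro q1 q2
      induction q1 using Quotient.ind with | _ x =>
      induction q2 using Quotient.ind with | _ y =>
      intro he
      simp only [F, Quotient.lift_mk] at he
      by_cases hxb : h.SameCycle x b
      · by_cases hyb : h.SameCycle y b
        · exact Quotient.sound (hxb.trans hyb.symm)
        · rw [if_pos hxb, if_neg hyb] at he; exact absurd he (by simp)
      · by_cases hyb : h.SameCycle y b
        · rw [if_neg hxb, if_pos hyb] at he; exact absurd he (by simp)
        · rw [if_neg hxb, if_neg hyb] at he
          have hfxy : f.SameCycle x y := Quotient.exact (Sum.inl.inj he)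
          apply Quotient.sound
          show h.SameCycle x y
          by_cases hxa : f.SameCycle x a
          · rcases split_cover hab hsc hxa with hx' | hx'
            · rcases split_cover hab hsc (hfxy.symm.trans hxa) with hy' | hy'
              · exact hx'.symm.trans hy'
              · exact absurd hy'.symm hyb
            · exact absurd hx'.symm hxb
          · exact (split_off_iff hsc hxa).mpr hfxy
    · intro s
      rcases s with q | u
      · induction q using Quotient.ind with | _ y =>
        by_cases hya : f.SameCycle y a
        · refine ⟨Quotient.mk (scs h) a, ?_⟩
          simp only [F, Quotient.lift_mk]
          rw [if_neg (split_not_sc hab hsc)]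
          exact congrArg Sum.inl (Quotient.sound hya.symm)
        · refine ⟨Quotient.mk (scs h) y, ?_⟩
          simp only [F, Quotient.lift_mk]
          have hnb : ¬ h.SameCycle y b := fun hyb =>
            hya ((sc_refine hsc hyb).trans hsc.symm)
          rw [if_neg hnb]
      · refine ⟨Quotient.mk (scs h) b, ?_⟩
        simp only [F, Quotient.lift_mk]
        rw [if_pos (Equiv.Perm.SameCycle.refl h b)]
  have hcard := Nat.card_eq_of_bijective F hbij
  rw [ncyc, ncyc, hcard, Nat.card_sum]
  simp

end Split

lemma merge_sc {f : Perm D} {a b : D} (hab : a ≠ b) (hns : ¬ f.SameCycle a b) :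
    (Equiv.swap a b * f).SameCycle a b := by
  classical
  have hex : ∃ n, 0 < n ∧ (f ^ n) a = a := ⟨orderOf f, orderOf_pos f, by
    rw [pow_orderOf_eq_one]; rfl⟩
  set m := Nat.find hex with hm
  have hmpos : 0 < m := (Nat.find_spec hex).1
  have hmspec : (f ^ m) a = a := (Nat.find_spec hex).2
  have hagree : ∀ i, i ≤ m - 1 → ((Equiv.swap a b * f) ^ i) a = (f ^ i) a := by
    intro i hi
    apply pow_agree
    intro j hj
    rw [swap_mul_apply]
    have hfj : f ((f ^ j) a) = (f ^ (j+1)) a := (pow_succ_apply f j a).symm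
    have hj1 : j + 1 < m := by omega
    have h1 : f ((f ^ j) a) ≠ a := by
      rw [hfj]; exact fun he => Nat.find_min hex hj1 ⟨Nat.succ_pos j, he⟩
    have h2 : f ((f ^ j) a) ≠ b := by
      rw [hfj]; exact fun he => hns (sc_pow.mpr ⟨j+1, he⟩)
    rw [if_neg h1, if_neg h2]
  apply sc_pow.mpr
  refine ⟨m, ?_⟩
  have hm1 : m = (m - 1) + 1 := by omega
  conv_lhs => rw [hm1]
  rw [pow_succ_apply, hagree (m-1) le_rfl, swap_mul_apply]
  have hlast : f ((f ^ (m-1)) a) = (f ^ m) a := by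
    conv_rhs => rw [hm1]
    exact ((pow_succ_apply f (m-1) a)).symm
  rw [hlast, hmspec, if_pos rfl]

lemma merge_ncyc {f : Perm D} {a b : D} (hab : a ≠ b) (hns : ¬ f.SameCycle a b) :
    ncyc (Equiv.swap a b * f) + 1 = ncyc f := by
  have hsc' := merge_sc hab hns
  have h2 := split_ncyc (f := Equiv.swap a b * f) hab hsc'
  rw [← mul_assoc, Equiv.swap_mul_self, one_mul] at h2
  omega

lemma ncyc_swap_mul_le {f : Perm D} {a b : D} (hab : a ≠ b) :
    ncyc (Equiv.swap a b * f) ≤ ncyc f + 1 := by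
  by_cases hsc : f.SameCycle a b
  · rw [split_ncyc hab hsc]
  · have := merge_ncyc hab hsc
    omega

end QuadRed
end
section
open Equiv Equiv.Perm
namespace QuadRed
variable {D : Type*} [Fintype D] [DecidableEq D]

def baseRel (L : List (D × D)) (x y : D) : Prop := (x, y) ∈ L ∨ (y, x) ∈ L

abbrev relL (L : List (D × D)) : D → D → Prop := Relation.EqvGen (baseRel L)

noncomputable def np (L : List (D × D)) : ℕ :=
  Nat.card (Quotient (Relation.EqvGen.setoid (baseRel L)))

def prodSwaps (L : List (D × D)) : Perm D := (L.map fun p => Equiv.swap p.1 p.2).prod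

lemma prodSwaps_nil : prodSwaps ([] : List (D × D)) = 1 := rfl

lemma prodSwaps_cons (p : D × D) (L : List (D × D)) :
    prodSwaps (p :: L) = Equiv.swap p.1 p.2 * prodSwaps L := by
  simp [prodSwaps]

lemma prodSwaps_append (L1 L2 : List (D × D)) :
    prodSwaps (L1 ++ L2) = prodSwaps L1 * prodSwaps L2 := by
  simp [prodSwaps]

lemma relL_mono {L L' : List (D × D)} (h : ∀ p ∈ L, p ∈ L') {x y : D}
    (hr : relL L x y) : relL L' x y := by
  refine Relation.EqvGen.mono ?_ _ _ hr
  rintro u v (huv | huv)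
  · exact Or.inl (h _ huv)
  · exact Or.inr (h _ huv)

/-- the factorization lemma: every permutation is a product of transpositions
whose relation spans its cycles. -/
lemma exists_factorization (f : Perm D) :
    ∃ L : List (D × D), prodSwaps L = f ∧ L.length + ncyc f = Fintype.card D ∧
      (∀ p ∈ L, p.1 ≠ p.2) ∧ (∀ x y, f.SameCycle x y → relL L x y) := by
  classical
  have H : ∀ k : ℕ, ∀ f : Perm D, Fintype.card D - ncyc f ≤ k →
      ∃ L : List (D × D), prodSwaps L = f ∧ L.length + ncyc f = Fintype.card D ∧
      (∀ p ∈ L, p.1 ≠ p.2) ∧ (∀ x y, f.SameCycle x y → relL L x y) := by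
    intro k
    induction k with
    | zero =>
      intro f hf
      have hle : ncyc f ≤ Fintype.card D := by
        rw [ncyc, ← Nat.card_eq_fintype_card]
        exact Nat.card_le_card_of_surjective _ Quotient.mk''_surjective
      have hcard : ncyc f = Fintype.card D := by omega
      have hf1 : f = 1 := by
        by_contra hne
        obtain ⟨a, ha⟩ : ∃ a, f a ≠ a := by
          by_contra hh
          push_neg at hh
          exact hne (Equiv.ext hh)
        have := ncyc_lt ha
        omega
      subst hf1
      refine ⟨[], rfl, by simpa using hcard, by simp, ?_⟩
      intro x y hxy
      rw [sc_one.mp hxy]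
      exact Relation.EqvGen.refl y
    | succ k ih =>
      intro f hf
      by_cases hf1 : f = 1
      · exact ih f (by simp [hf1, ncyc_one])
      obtain ⟨a, ha⟩ : ∃ a, f a ≠ a := by
        by_contra hh
        push_neg at hh
        exact hf1 (Equiv.ext hh)
      set b := f a with hb
      have hab : a ≠ b := Ne.symm ha
      have hsc : f.SameCycle a b := sc_apply_self a
      set h : Perm D := Equiv.swap a b * f with hh
      have hn : ncyc h = ncyc f + 1 := split_ncyc hab hsc
      have hlt : ncyc f < Fintype.card D := ncyc_lt ha
      obtain ⟨L', hprod, hlen, hne', hspan⟩ := ih h (by omega)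
      refine ⟨(a, b) :: L', ?_, ?_, ?_, ?_⟩
      · rw [prodSwaps_cons, hprod, hh, ← mul_assoc, Equiv.swap_mul_self, one_mul]
      · simp only [List.length_cons]
        omega
      · rintro p hp
        rcases List.mem_cons.mp hp with rfl | hp
        · exact hab
        · exact hne' p hp
      · intro x y hxy
        have hmono : ∀ u v, relL L' u v → relL ((a,b) :: L') u v :=
          fun u v huv => relL_mono (fun p hp => List.mem_cons_of_mem _ hp) huv
        have hbase : relL ((a,b) :: L') a b :=
          Relation.EqvGen.rel _ _ (Or.inl List.mem_cons_self)
        by_cases hxa : f.SameCycle x a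
        · have hya : f.SameCycle y a := hxy.symm.trans hxa
          have hcx := split_cover hab hsc hxa
          have hcy := split_cover hab hsc hya
          have key : ∀ z : D, f.SameCycle z a → relL ((a,b) :: L') z a := by
            intro z hz
            rcases split_cover hab hsc hz with hz' | hz'
            · exact Relation.EqvGen.symm _ _ (hmono _ _ (hspan _ _ hz'))
            · exact Relation.EqvGen.trans _ _ _
                (Relation.EqvGen.symm _ _ (hmono _ _ (hspan _ _ hz')))
                (Relation.EqvGen.symm _ _ hbase)
          exact Relation.EqvGen.trans _ _ _ (key x hxa)
            (Relation.EqvGen.symm _ _ (key y hya))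
        · exact hmono _ _ (hspan x y ((split_off_iff hsc hxa).mpr hxy))
  exact H (Fintype.card D) f (by omega)

end QuadRed
end
section
open Equiv Equiv.Perm
namespace QuadRed
variable {D : Type*} [Fintype D] [DecidableEq D]

lemma zpow_apply_comm (f : Perm D) (i : ℤ) (z : D) : (f ^ i) (f z) = f ((f ^ i) z) := by
  rw [← mul_apply, ← mul_apply]
  congr 1
  rw [← zpow_add_one, ← zpow_one_add, add_comm]

lemma sc_conj {f : Perm D} {x y : D} : f.SameCycle (f x) (f y) ↔ f.SameCycle x y := by
  constructor
  · rintro ⟨i, hi⟩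
    rw [zpow_apply_comm] at hi
    exact ⟨i, f.injective hi⟩
  · rintro ⟨i, hi⟩
    refine ⟨i, ?_⟩
    rw [zpow_apply_comm, hi]

/-- pointwise spanning: each dart is related to its image under the product. -/
lemma relL_point : ∀ L : List (D × D), ∀ z : D, relL L z (prodSwaps L z) := by
  intro L
  induction L using List.reverseRecOn with
  | nil => intro z; rw [prodSwaps_nil]; exact Relation.EqvGen.refl z
  | append_singleton L p ih =>
    intro z
    rw [prodSwaps_append]
    have h1 : relL (L ++ [p]) z (Equiv.swap p.1 p.2 z) := by
      rcases eq_or_ne z p.1 with rfl | h1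
      · rw [Equiv.swap_apply_left]
        exact Relation.EqvGen.rel _ _ (Or.inl (by simp))
      rcases eq_or_ne z p.2 with rfl | h2
      · rw [Equiv.swap_apply_right]
        exact Relation.EqvGen.rel _ _ (Or.inr (by simp))
      · rw [Equiv.swap_apply_of_ne_of_ne h1 h2]
        exact Relation.EqvGen.refl z
    have h2 : relL (L ++ [p]) (Equiv.swap p.1 p.2 z)
        (prodSwaps L (Equiv.swap p.1 p.2 z)) :=
      relL_mono (fun q hq => by simp [hq]) (ih _)
    have hsp : prodSwaps [p] = Equiv.swap p.1 p.2 := by simp [prodSwaps]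
    rw [hsp, mul_apply]
    exact Relation.EqvGen.trans _ _ _ h1 h2

lemma relL_span {L : List (D × D)} {x y : D} (h : (prodSwaps L).SameCycle x y) :
    relL L x y := by
  obtain ⟨n, rfl⟩ := sc_pow.mp h
  clear h
  induction n with
  | zero => exact Relation.EqvGen.refl x
  | succ n ih =>
    rw [pow_succ_apply]
    exact Relation.EqvGen.trans _ _ _ ih (relL_point L _)

lemma relL_nil_eq : ∀ {x y : D}, relL ([] : List (D × D)) x y → x = y := by
  intro x y h
  induction h with
  | rel u v h => rcases h with h | h <;> simp at h
  | refl => rfl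
  | symm u v _ ih => exact ih.symm
  | trans u v w _ _ ih1 ih2 => exact ih1.trans ih2

lemma np_nil : np ([] : List (D × D)) = Fintype.card D := by
  have hb : Function.Bijective
      (fun x : D => (Quotient.mk (Relation.EqvGen.setoid (baseRel ([] : List (D × D)))) x)) := by
    constructor
    · intro x y h
      exact relL_nil_eq (Quotient.exact h)
    · exact fun q => Quotient.exists_rep q
  rw [np, ← Nat.card_eq_of_bijective _ hb, Nat.card_eq_fintype_card]

/-- structure of adding one pair to a generated equivalence. -/
lemma relL_add {L : List (D × D)} {a b x y : D}
    (h : relL (L ++ [(a, b)]) x y) :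
    relL L x y ∨ (relL L x a ∧ relL L b y) ∨ (relL L x b ∧ relL L a y) := by
  induction h with
  | rel u v h =>
    rcases h with h | h
    · rcases List.mem_append.mp h with h | h
      · exact Or.inl (Relation.EqvGen.rel _ _ (Or.inl h))
      · simp only [List.mem_singleton, Prod.mk.injEq] at h
        obtain ⟨rfl, rfl⟩ := h
        exact Or.inr (Or.inl ⟨Relation.EqvGen.refl _, Relation.EqvGen.refl _⟩)
    · rcases List.mem_append.mp h with h | h
      · exact Or.inl (Relation.EqvGen.rel _ _ (Or.inr h))
      · simp only [List.mem_singleton, Prod.mk.injEq] at h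
        obtain ⟨rfl, rfl⟩ := h
        exact Or.inr (Or.inr ⟨Relation.EqvGen.refl _, Relation.EqvGen.refl _⟩)
  | refl => exact Or.inl (Relation.EqvGen.refl _)
  | symm u v _ ih =>
    rcases ih with h | ⟨h1, h2⟩ | ⟨h1, h2⟩
    · exact Or.inl (Relation.EqvGen.symm _ _ h)
    · exact Or.inr (Or.inr ⟨Relation.EqvGen.symm _ _ h2, Relation.EqvGen.symm _ _ h1⟩)
    · exact Or.inr (Or.inl ⟨Relation.EqvGen.symm _ _ h2, Relation.EqvGen.symm _ _ h1⟩)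
  | trans u v w _ _ ih1 ih2 =>
    rcases ih1 with h | ⟨h1, h2⟩ | ⟨h1, h2⟩ <;>
      rcases ih2 with h' | ⟨h1', h2'⟩ | ⟨h1', h2'⟩
    · exact Or.inl (Relation.EqvGen.trans _ _ _ h h')
    · exact Or.inr (Or.inl ⟨Relation.EqvGen.trans _ _ _ h h1', h2'⟩)
    · exact Or.inr (Or.inr ⟨Relation.EqvGen.trans _ _ _ h h1', h2'⟩)
    · exact Or.inr (Or.inl ⟨h1, Relation.EqvGen.trans _ _ _ h2 h'⟩)
    · exact Or.inr (Or.inl ⟨h1, h2'⟩)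
    · exact Or.inl (Relation.EqvGen.trans _ _ _ h1 h2')
    · exact Or.inr (Or.inr ⟨h1, Relation.EqvGen.trans _ _ _ h2 h'⟩)
    · exact Or.inl (Relation.EqvGen.trans _ _ _ h1 h2')
    · exact Or.inr (Or.inr ⟨h1, h2'⟩)

open Classical in
lemma np_add (L : List (D × D)) (a b : D) : np L ≤ np (L ++ [(a, b)]) + 1 := by
  set r := Relation.EqvGen.setoid (baseRel L) with hr
  set r' := Relation.EqvGen.setoid (baseRel (L ++ [(a, b)])) with hr'
  have hmono : ∀ x y : D, relL L x y → relL (L ++ [(a,b)]) x y :=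
    fun x y h => relL_mono (fun q hq => by simp [hq]) h
  have wd : ∀ x y : D, relL L x y →
      (if relL L x b then (none : Option (Quotient r')) else some (Quotient.mk r' x)) =
      (if relL L y b then (none : Option (Quotient r')) else some (Quotient.mk r' y)) := by
    intro x y hxy
    by_cases hxb : relL L x b
    · rw [if_pos hxb, if_pos (Relation.EqvGen.trans _ _ _ (Relation.EqvGen.symm _ _ hxy) hxb)]
    · have hyb : ¬ relL L y b := fun hyb => hxb (Relation.EqvGen.trans _ _ _ hxy hyb)
      rw [if_neg hxb, if_neg hyb]
      exact congrArg some (Quotient.sound (hmono _ _ hxy))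
  let F : Quotient r → Option (Quotient r') := Quotient.lift _ wd
  have hinj : Function.Injective F := by
    intro q1 q2
    induction q1 using Quotient.ind with | _ x =>
    induction q2 using Quotient.ind with | _ y =>
    intro he
    simp only [F, Quotient.lift_mk] at he
    by_cases hxb : relL L x b
    · by_cases hyb : relL L y b
      · exact Quotient.sound (Relation.EqvGen.trans _ _ _ hxb (Relation.EqvGen.symm _ _ hyb))
      · rw [if_pos hxb, if_neg hyb] at he; exact absurd he (by simp)
    · by_cases hyb : relL L y b
      · rw [if_neg hxb, if_pos hyb] at he; exact absurd he (by simp)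
      · rw [if_neg hxb, if_neg hyb] at he
        have hxy' : relL (L ++ [(a,b)]) x y := Quotient.exact (Option.some.inj he)
        rcases relL_add hxy' with h | ⟨h1, h2⟩ | ⟨h1, h2⟩
        · exact Quotient.sound h
        · exact absurd (Relation.EqvGen.symm _ _ h2) hyb
        · exact absurd h1 hxb
  have hle := Nat.card_le_card_of_injective F hinj
  have hopt : Nat.card (Option (Quotient r')) = Nat.card (Quotient r') + 1 :=
    Finite.card_option
  rw [hopt] at hle
  exact hle

open Classical in
lemma np_eq_of_rel {L : List (D × D)} {a b : D} (h : relL L a b) :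
    np (L ++ [(a, b)]) = np L := by
  have hiff : ∀ x y : D, relL (L ++ [(a,b)]) x y ↔ relL L x y := by
    intro x y
    constructor
    · intro hxy
      rcases relL_add hxy with h' | ⟨h1, h2⟩ | ⟨h1, h2⟩
      · exact h'
      · exact Relation.EqvGen.trans _ _ _ h1 (Relation.EqvGen.trans _ _ _ h h2)
      · exact Relation.EqvGen.trans _ _ _ h1
          (Relation.EqvGen.trans _ _ _ (Relation.EqvGen.symm _ _ h) h2)
    · exact fun hxy => relL_mono (fun q hq => by simp [hq]) hxy
  have : Relation.EqvGen.setoid (baseRel (L ++ [(a,b)])) =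
      Relation.EqvGen.setoid (baseRel L) := Setoid.ext hiff
  rw [np, np, this]

lemma stair : ∀ L : List (D × D), (∀ p ∈ L, p.1 ≠ p.2) →
    ncyc (prodSwaps L) + Fintype.card D ≤ L.length + 2 * np L := by
  intro L
  induction L using List.reverseRecOn with
  | nil =>
    intro _
    rw [prodSwaps_nil, ncyc_one, np_nil]
    omega
  | append_singleton L p ih =>
    intro hne
    have hne' : ∀ q ∈ L, q.1 ≠ q.2 := fun q hq => hne q (by simp [hq])
    have hab : p.1 ≠ p.2 := hne p (by simp)
    have IH := ih hne'
    obtain ⟨a, b⟩ := p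
    set g := prodSwaps L with hg
    have hprod : prodSwaps (L ++ [(a, b)]) = Equiv.swap (g a) (g b) * g := by
      rw [prodSwaps_append, ← mul_swap_eq_swap_mul]
      rfl
    have hgab : g a ≠ g b := fun h => hab (g.injective h)
    by_cases hrel : relL L a b
    · have hnp : np (L ++ [(a,b)]) = np L := np_eq_of_rel hrel
      have hle : ncyc (Equiv.swap (g a) (g b) * g) ≤ ncyc g + 1 := ncyc_swap_mul_le hgab
      rw [hprod, hnp]
      simp only [List.length_append, List.length_singleton]
      omega
    · have hnsc : ¬ g.SameCycle a b := fun h => hrel (relL_span h)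
      have hnsc' : ¬ g.SameCycle (g a) (g b) := fun h => hnsc (sc_conj.mp h)
      have hm := merge_ncyc hgab hnsc'
      have hnp := np_add L a b
      rw [hprod]
      simp only [List.length_append, List.length_singleton]
      omega

lemma sc_invol {α : Perm D} (hinv : ∀ d, α (α d) = d) {x y : D} :
    α.SameCycle x y ↔ y = x ∨ y = α x := by
  constructor
  · intro h
    obtain ⟨n, rfl⟩ := sc_pow.mp h
    clear h
    induction n with
    | zero => exact Or.inl rfl
    | succ n ih =>
      rw [pow_succ_apply]
      rcases ih with h | h
      · rw [h]; exact Or.inr rfl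
      · rw [h, hinv]; exact Or.inl rfl
  · rintro (rfl | rfl)
    · exact Equiv.Perm.SameCycle.refl _ _
    · exact sc_apply_self x

lemma card_eq_two_mul_ncyc_invol {α : Perm D} (hinv : ∀ d, α (α d) = d)
    (hfpf : ∀ d, α d ≠ d) : Fintype.card D = 2 * ncyc α := by
  classical
  let e : Quotient (scs α) × Bool → D := fun qi => if qi.2 then α qi.1.out else qi.1.out
  have hrel : ∀ qi : Quotient (scs α) × Bool, α.SameCycle qi.1.out (e qi) := by
    rintro ⟨q, i⟩
    by_cases hi : i
    · simp only [e, hi, if_true]; exact sc_apply_self _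
    · simp only [e, hi, if_false]; exact Equiv.Perm.SameCycle.refl _ _
  have hbij : Function.Bijective e := by
    constructor
    · rintro ⟨q1, i1⟩ ⟨q2, i2⟩ he
      have hq : q1 = q2 := by
        have h1 : (Quotient.mk (scs α) (e (q1, i1))) = q1 := by
          conv_rhs => rw [← Quotient.out_eq q1]
          exact Quotient.sound (hrel (q1, i1)).symm
        have h2 : (Quotient.mk (scs α) (e (q2, i2))) = q2 := by
          conv_rhs => rw [← Quotient.out_eq q2]
          exact Quotient.sound (hrel (q2, i2)).symm
        rw [← h1, ← h2, he]
      subst hq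
      have hi : i1 = i2 := by
        rcases Bool.eq_false_or_eq_true i1 with hb1 | hb1 <;>
          rcases Bool.eq_false_or_eq_true i2 with hb2 | hb2
        · rw [hb1, hb2]
        · simp only [e, hb1, hb2, Bool.false_eq_true, if_true, if_false] at he
          exact absurd he (hfpf q1.out)
        · simp only [e, hb1, hb2, Bool.false_eq_true, if_true, if_false] at he
          exact absurd he.symm (hfpf q1.out)
        · rw [hb1, hb2]
      rw [hi]
    · intro x
      have h := Quotient.mk_out (s := scs α) x
      rcases (sc_invol hinv).mp h with h' | h'
      · refine ⟨((Quotient.mk (scs α) x), false), ?_⟩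
        simp only [e, Bool.false_eq_true, if_false]
        exact h'.symm
      · refine ⟨((Quotient.mk (scs α) x), true), ?_⟩
        simp only [e, if_true]
        exact h'.symm
  have hcard := Nat.card_eq_of_bijective e hbij
  rw [Nat.card_prod] at hcard
  have hbool : Nat.card Bool = 2 := by
    rw [Nat.card_eq_fintype_card]; rfl
  rw [hbool, Nat.card_eq_fintype_card (α := D)] at hcard
  rw [ncyc] at *
  omega

def Rch (σ α : Perm D) : D → D → Prop :=
  Relation.ReflTransGen (fun x y => σ x = y ∨ α x = y)

lemma rch_pow_sigma (σ α : Perm D) (x : D) (n : ℕ) : Rch σ α x ((σ ^ n) x) := by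
  induction n with
  | zero => exact Relation.ReflTransGen.refl
  | succ n ih => exact ih.tail (Or.inl (pow_succ_apply σ n x).symm)

lemma rch_pow_alpha (σ α : Perm D) (x : D) (n : ℕ) : Rch σ α x ((α ^ n) x) := by
  induction n with
  | zero => exact Relation.ReflTransGen.refl
  | succ n ih => exact ih.tail (Or.inr (pow_succ_apply α n x).symm)

lemma rch_sigma_rev (σ α : Perm D) (x : D) : Rch σ α (σ x) x := by
  have h := rch_pow_sigma σ α (σ x) (orderOf σ - 1)
  have he : (σ ^ (orderOf σ - 1)) (σ x) = x := by
    rw [← mul_apply, ← pow_succ, Nat.sub_add_cancel (orderOf_pos σ), pow_orderOf_eq_one]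
    rfl
  rwa [he] at h

lemma rch_alpha_rev (σ α : Perm D) (x : D) : Rch σ α (α x) x := by
  have h := rch_pow_alpha σ α (α x) (orderOf α - 1)
  have he : (α ^ (orderOf α - 1)) (α x) = x := by
    rw [← mul_apply, ← pow_succ, Nat.sub_add_cancel (orderOf_pos α), pow_orderOf_eq_one]
    rfl
  rwa [he] at h

lemma rch_symm {σ α : Perm D} {x y : D} (h : Rch σ α x y) : Rch σ α y x := by
  induction h with
  | refl => exact Relation.ReflTransGen.refl
  | tail _ hstep ih =>
    refine Relation.ReflTransGen.trans ?_ ih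
    rcases hstep with h' | h'
    · exact h' ▸ rch_sigma_rev σ α _
    · exact h' ▸ rch_alpha_rev σ α _

theorem euler4 (σ α : Perm D) (hinv : ∀ d, α (α d) = d) (hfpf : ∀ d, α d ≠ d)
    (r1 r2 : D) (hre : ∀ d, Rch σ α d r1 ∨ Rch σ α d r2) :
    ncyc σ + ncyc (σ * α) ≤ ncyc α + 4 := by
  classical
  obtain ⟨Ls, hsprod, hslen, hsne, hsspan⟩ := exists_factorization σ
  obtain ⟨La, haprod, halen, hane, haspan⟩ := exists_factorization α
  set L := Ls ++ La with hL
  have hprod : prodSwaps L = σ * α := by rw [hL, prodSwaps_append, hsprod, haprod]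
  have hne : ∀ p ∈ L, p.1 ≠ p.2 := by
    intro p hp
    rcases List.mem_append.mp hp with h | h
    · exact hsne p h
    · exact hane p h
  have hstair := stair L hne
  rw [hprod] at hstair
  -- transport reachability into relL L
  have hmove : ∀ x y : D, (σ x = y ∨ α x = y) → relL L x y := by
    rintro x y (rfl | rfl)
    · exact relL_mono (fun q hq => by simp [hL, hq])
        (hsspan x (σ x) (sc_apply_self x))
    · exact relL_mono (fun q hq => by simp [hL, hq])
        (haspan x (α x) (sc_apply_self x))
  have hrch : ∀ x y : D, Rch σ α x y → relL L x y := by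
    intro x y h
    induction h with
    | refl => exact Relation.EqvGen.refl _
    | tail _ hstep ih => exact Relation.EqvGen.trans _ _ _ ih (hmove _ _ hstep)
  have hsurj : Function.Surjective
      (fun i : Bool => if i then Quotient.mk (Relation.EqvGen.setoid (baseRel L)) r1
        else Quotient.mk (Relation.EqvGen.setoid (baseRel L)) r2) := by
    intro q
    induction q using Quotient.ind with | _ x =>
    rcases hre x with h | h
    · exact ⟨true, by simpa using (Quotient.sound (hrch _ _ h)).symm⟩
    · exact ⟨false, by simpa using (Quotient.sound (hrch _ _ h)).symm⟩
  have hnp : np L ≤ 2 := by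
    have := Nat.card_le_card_of_surjective _ hsurj
    rw [Nat.card_eq_fintype_card (α := Bool)] at this
    simpa [np] using this
  have hcard := card_eq_two_mul_ncyc_invol hinv hfpf
  have hlen : L.length = Ls.length + La.length := List.length_append
  omega

end QuadRed
end
section
open Equiv Equiv.Perm CombMap
namespace QuadRed

set_option maxHeartbeats 1000000 in
lemma extendColoring
    (M M' : CombMap) (hcub : M.Cubic)
    (q1 q2 q3 q4 : M.D)
    (hf1 : M.φ q1 = q2) (hf2 : M.φ q2 = q3) (hf3 : M.φ q3 = q4) (hf4 : M.φ q4 = q1)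
    (S : Finset M.D)
    (hS : S = {q1, q2, q3, q4, M.α q1, M.α q2, M.α q3, M.α q4,
               M.σ q1, M.σ q2, M.σ q3, M.σ q4})
    (hScard : S.card = 12)
    (ι : M'.D → M.D) (hι : Function.Injective ι)
    (hrange : ∀ d : M.D, d ∈ Set.range ι ↔ d ∉ S)
    (hσ : ∀ d', ι (M'.σ d') = M.σ (ι d'))
    (p1 p2 p3 p4 : M'.D)
    (hp1 : ι p1 = M.α (M.σ q1)) (hp2 : ι p2 = M.α (M.σ q2))
    (hp3 : ι p3 = M.α (M.σ q3)) (hp4 : ι p4 = M.α (M.σ q4))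
    (hα : ∀ d', d' ≠ p1 → d' ≠ p2 → d' ≠ p3 → d' ≠ p4 → ι (M'.α d') = M.α (ι d'))
    (hα12 : M'.α p1 = p2) (hα34 : M'.α p3 = p4)
    (c' : M'.D → Fin 4) (hcol : M'.FaceColoring 4 c') (h13 : c' p1 = c' p3) :
    ∃ c : M.D → Fin 4, M.FaceColoring 4 c := by
  classical
  have : Nonempty M'.D := ⟨p1⟩
  have hα_invol := M.α_invol
  have hσ3 := hcub.1
  have hφ_apply : ∀ d, M.φ d = M.σ (M.α d) := fun d => rfl
  have hαq1 : M.α q1 = M.σ (M.σ q2) := by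
    have h := hf1; rw [hφ_apply] at h
    calc M.α q1 = M.σ (M.σ (M.σ (M.α q1))) := (hσ3 _).symm
    _ = M.σ (M.σ q2) := by rw [h]
  have hαq2 : M.α q2 = M.σ (M.σ q3) := by
    have h := hf2; rw [hφ_apply] at h
    calc M.α q2 = M.σ (M.σ (M.σ (M.α q2))) := (hσ3 _).symm
    _ = M.σ (M.σ q3) := by rw [h]
  have hαq3 : M.α q3 = M.σ (M.σ q4) := by
    have h := hf3; rw [hφ_apply] at h
    calc M.α q3 = M.σ (M.σ (M.σ (M.α q3))) := (hσ3 _).symm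
    _ = M.σ (M.σ q4) := by rw [h]
  have hαq4 : M.α q4 = M.σ (M.σ q1) := by
    have h := hf4; rw [hφ_apply] at h
    calc M.α q4 = M.σ (M.σ (M.σ (M.α q4))) := (hσ3 _).symm
    _ = M.σ (M.σ q1) := by rw [h]
  have hq1S : q1 ∈ S := by rw [hS]; simp
  have hq2S : q2 ∈ S := by rw [hS]; simp
  have hq3S : q3 ∈ S := by rw [hS]; simp
  have hq4S : q4 ∈ S := by rw [hS]; simp
  have haq1S : M.α q1 ∈ S := by rw [hS]; simp
  have haq2S : M.α q2 ∈ S := by rw [hS]; simp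
  have haq3S : M.α q3 ∈ S := by rw [hS]; simp
  have haq4S : M.α q4 ∈ S := by rw [hS]; simp
  have hsq1S : M.σ q1 ∈ S := by rw [hS]; simp
  have hsq2S : M.σ q2 ∈ S := by rw [hS]; simp
  have hsq3S : M.σ q3 ∈ S := by rw [hS]; simp
  have hsq4S : M.σ q4 ∈ S := by rw [hS]; simp
  have hnotS : ∀ z : M'.D, ι z ∉ S := fun z => (hrange (ι z)).mp ⟨z, rfl⟩
  have hSl : S = ([q1, q2, q3, q4, M.α q1, M.α q2, M.α q3, M.α q4, M.σ q1, M.σ q2, M.σ q3, M.σ q4] : List M.D).toFinset := by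
    rw [hS]; simp
  have hlcard : ([q1, q2, q3, q4, M.α q1, M.α q2, M.α q3, M.α q4, M.σ q1, M.σ q2, M.σ q3, M.σ q4] : List M.D).toFinset.card
      = ([q1, q2, q3, q4, M.α q1, M.α q2, M.α q3, M.α q4, M.σ q1, M.σ q2, M.σ q3, M.σ q4] : List M.D).length := by rw [← hSl, hScard]; rfl
  rw [List.card_toFinset] at hlcard
  have hnodup : ([q1, q2, q3, q4, M.α q1, M.α q2, M.α q3, M.α q4, M.σ q1, M.σ q2, M.σ q3, M.σ q4] : List M.D).Nodup :=
    List.dedup_eq_self.mp (List.Sublist.eq_of_length (List.dedup_sublist _) hlcard)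
  simp only [List.nodup_cons, List.mem_cons, List.mem_singleton, List.not_mem_nil, or_false,
    not_or, and_true, List.nodup_nil] at hnodup
  obtain ⟨⟨nd_0_1, nd_0_2, nd_0_3, nd_0_4, nd_0_5, nd_0_6, nd_0_7, nd_0_8, nd_0_9, nd_0_10, nd_0_11⟩, ⟨nd_1_2, nd_1_3, nd_1_4, nd_1_5, nd_1_6, nd_1_7, nd_1_8, nd_1_9, nd_1_10, nd_1_11⟩, ⟨nd_2_3, nd_2_4, nd_2_5, nd_2_6, nd_2_7, nd_2_8, nd_2_9, nd_2_10, nd_2_11⟩, ⟨nd_3_4, nd_3_5, nd_3_6, nd_3_7, nd_3_8, nd_3_9, nd_3_10, nd_3_11⟩, ⟨nd_4_5, nd_4_6, nd_4_7, nd_4_8, nd_4_9, nd_4_10, nd_4_11⟩, ⟨nd_5_6, nd_5_7, nd_5_8, nd_5_9, nd_5_10, nd_5_11⟩, ⟨nd_6_7, nd_6_8, nd_6_9, nd_6_10, nd_6_11⟩, ⟨nd_7_8, nd_7_9, nd_7_10, nd_7_11⟩, ⟨nd_8_9, nd_8_10, nd_8_11⟩, ⟨nd_9_10, nd_9_11⟩,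 ⟨nd_10_11, -⟩⟩ := hnodup
  -- M' facts
  have hα21 : M'.α p2 = p1 := by rw [← hα12, M'.α_invol]
  have hα43 : M'.α p4 = p3 := by rw [← hα34, M'.α_invol]
  have hφ'_apply : ∀ d', M'.φ d' = M'.σ (M'.α d') := fun d' => rfl
  have hφ'p1 : M'.φ p1 = M'.σ p2 := by rw [hφ'_apply, hα12]
  have hφ'p2 : M'.φ p2 = M'.σ p1 := by rw [hφ'_apply, hα21]
  have hφ'p3 : M'.φ p3 = M'.σ p4 := by rw [hφ'_apply, hα34]
  have hφ'p4 : M'.φ p4 = M'.σ p3 := by rw [hφ'_apply, hα43]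
  -- face identities in M
  have hφ_sq1 : M.φ (M.σ q1) = ι (M'.σ p1) := by
    rw [hφ_apply, ← hp1]; exact (hσ p1).symm
  have hφ_sq2 : M.φ (M.σ q2) = ι (M'.σ p2) := by
    rw [hφ_apply, ← hp2]; exact (hσ p2).symm
  have hφ_sq3 : M.φ (M.σ q3) = ι (M'.σ p3) := by
    rw [hφ_apply, ← hp3]; exact (hσ p3).symm
  have hφ_sq4 : M.φ (M.σ q4) = ι (M'.σ p4) := by
    rw [hφ_apply, ← hp4]; exact (hσ p4).symm
  have hφ_ιp1 : M.φ (ι p1) = M.α q4 := by rw [hφ_apply, hp1, hα_invol, hαq4]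
  have hφ_ιp2 : M.φ (ι p2) = M.α q1 := by rw [hφ_apply, hp2, hα_invol, hαq1]
  have hφ_ιp3 : M.φ (ι p3) = M.α q2 := by rw [hφ_apply, hp3, hα_invol, hαq2]
  have hφ_ιp4 : M.φ (ι p4) = M.α q3 := by rw [hφ_apply, hp4, hα_invol, hαq3]
  have hφ_αq1 : M.φ (M.α q1) = M.σ q1 := by rw [hφ_apply, hα_invol]
  have hφ_αq2 : M.φ (M.α q2) = M.σ q2 := by rw [hφ_apply, hα_invol]
  have hφ_αq3 : M.φ (M.α q3) = M.σ q3 := by rw [hφ_apply, hα_invol]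
  have hφ_αq4 : M.φ (M.α q4) = M.σ q4 := by rw [hφ_apply, hα_invol]
  have hαιp1 : M.α (ι p1) = M.σ q1 := by rw [hp1, hα_invol]
  have hαιp2 : M.α (ι p2) = M.σ q2 := by rw [hp2, hα_invol]
  have hαιp3 : M.α (ι p3) = M.σ q3 := by rw [hp3, hα_invol]
  have hαιp4 : M.α (ι p4) = M.σ q4 := by rw [hp4, hα_invol]
  have hinvι : ∀ z, Function.invFun ι (ι z) = z := Function.leftInverse_invFun hι
  -- choose the quadrilateral's color
  obtain ⟨t, ht1, ht2, ht4⟩ : ∃ t : Fin 4, t ≠ c' p1 ∧ t ≠ c' p2 ∧ t ≠ c' p4 := by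
    by_contra hno
    push_neg at hno
    have hall : ∀ t : Fin 4, t = c' p1 ∨ t = c' p2 ∨ t = c' p4 := by
      intro t
      by_contra hh
      push_neg at hh
      exact absurd (hno t hh.1 hh.2.1) hh.2.2
    have hsub : (Finset.univ : Finset (Fin 4)) ⊆ {c' p1, c' p2, c' p4} := by
      intro t _
      rcases hall t with h | h | h <;> simp [h]
    have h1 := Finset.card_le_card hsub
    have h2 : ({c' p1, c' p2, c' p4} : Finset (Fin 4)).card ≤ 3 := by
      apply le_trans (Finset.card_insert_le _ _)
      have := Finset.card_insert_le (c' p2) ({c' p4} : Finset (Fin 4))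
      simp at this ⊢
      omega
    rw [Finset.card_univ] at h1
    simp at h1
    omega
  set c : M.D → Fin 4 := fun d =>
    if (d = q1 ∨ d = q2 ∨ d = q3 ∨ d = q4) then t
    else if (d = M.σ q1 ∨ d = M.α q1) then c' p2
    else if (d = M.σ q2 ∨ d = M.α q4) then c' p1
    else if (d = M.σ q3 ∨ d = M.α q3) then c' p4
    else if (d = M.σ q4 ∨ d = M.α q2) then c' p3
    else c' (Function.invFun ι d) with hcdef
  have hcq1 : c (q1) = t := by
    simp only [hcdef]
    simp
  have hcq2 : c (q2) = t := by
    simp only [hcdef]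
    simp
  have hcq3 : c (q3) = t := by
    simp only [hcdef]
    simp
  have hcq4 : c (q4) = t := by
    simp only [hcdef]
    simp
  have hcsq1 : c (M.σ q1) = c' p2 := by
    have hn1 : ¬(M.σ q1 = q1 ∨ M.σ q1 = q2 ∨ M.σ q1 = q3 ∨ M.σ q1 = q4) := by
      rintro (h|h|h|h)
      · exact nd_0_8 h.symm
      · exact nd_1_8 h.symm
      · exact nd_2_8 h.symm
      · exact nd_3_8 h.symm
    simp only [hcdef]
    rw [if_neg hn1]
    simp
  have hcaq1 : c (M.α q1) = c' p2 := by
    have hn1 : ¬(M.α q1 = q1 ∨ M.α q1 = q2 ∨ M.α q1 = q3 ∨ M.α q1 = q4) := by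
      rintro (h|h|h|h)
      · exact nd_0_4 h.symm
      · exact nd_1_4 h.symm
      · exact nd_2_4 h.symm
      · exact nd_3_4 h.symm
    simp only [hcdef]
    rw [if_neg hn1]
    simp
  have hcsq2 : c (M.σ q2) = c' p1 := by
    have hn1 : ¬(M.σ q2 = q1 ∨ M.σ q2 = q2 ∨ M.σ q2 = q3 ∨ M.σ q2 = q4) := by
      rintro (h|h|h|h)
      · exact nd_0_9 h.symm
      · exact nd_1_9 h.symm
      · exact nd_2_9 h.symm
      · exact nd_3_9 h.symm
    have hn2 : ¬(M.σ q2 = M.σ q1 ∨ M.σ q2 = M.α q1) := by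
      rintro (h|h)
      · exact nd_8_9 h.symm
      · exact nd_4_9 h.symm
    simp only [hcdef]
    rw [if_neg hn1, if_neg hn2]
    simp
  have hcaq4 : c (M.α q4) = c' p1 := by
    have hn1 : ¬(M.α q4 = q1 ∨ M.α q4 = q2 ∨ M.α q4 = q3 ∨ M.α q4 = q4) := by
      rintro (h|h|h|h)
      · exact nd_0_7 h.symm
      · exact nd_1_7 h.symm
      · exact nd_2_7 h.symm
      · exact nd_3_7 h.symm
    have hn2 : ¬(M.α q4 = M.σ q1 ∨ M.α q4 = M.α q1) := by
      rintro (h|h)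
      · exact nd_7_8 h
      · exact nd_4_7 h.symm
    simp only [hcdef]
    rw [if_neg hn1, if_neg hn2]
    simp
  have hcsq3 : c (M.σ q3) = c' p4 := by
    have hn1 : ¬(M.σ q3 = q1 ∨ M.σ q3 = q2 ∨ M.σ q3 = q3 ∨ M.σ q3 = q4) := by
      rintro (h|h|h|h)
      · exact nd_0_10 h.symm
      · exact nd_1_10 h.symm
      · exact nd_2_10 h.symm
      · exact nd_3_10 h.symm
    have hn2 : ¬(M.σ q3 = M.σ q1 ∨ M.σ q3 = M.α q1) := by
      rintro (h|h)
      · exact nd_8_10 h.symm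
      · exact nd_4_10 h.symm
    have hn3 : ¬(M.σ q3 = M.σ q2 ∨ M.σ q3 = M.α q4) := by
      rintro (h|h)
      · exact nd_9_10 h.symm
      · exact nd_7_10 h.symm
    simp only [hcdef]
    rw [if_neg hn1, if_neg hn2, if_neg hn3]
    simp
  have hcaq3 : c (M.α q3) = c' p4 := by
    have hn1 : ¬(M.α q3 = q1 ∨ M.α q3 = q2 ∨ M.α q3 = q3 ∨ M.α q3 = q4) := by
      rintro (h|h|h|h)
      · exact nd_0_6 h.symm
      · exact nd_1_6 h.symm
      · exact nd_2_6 h.symm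
      · exact nd_3_6 h.symm
    have hn2 : ¬(M.α q3 = M.σ q1 ∨ M.α q3 = M.α q1) := by
      rintro (h|h)
      · exact nd_6_8 h
      · exact nd_4_6 h.symm
    have hn3 : ¬(M.α q3 = M.σ q2 ∨ M.α q3 = M.α q4) := by
      rintro (h|h)
      · exact nd_6_9 h
      · exact nd_6_7 h
    simp only [hcdef]
    rw [if_neg hn1, if_neg hn2, if_neg hn3]
    simp
  have hcsq4 : c (M.σ q4) = c' p3 := by
    have hn1 : ¬(M.σ q4 = q1 ∨ M.σ q4 = q2 ∨ M.σ q4 = q3 ∨ M.σ q4 = q4) := by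
      rintro (h|h|h|h)
      · exact nd_0_11 h.symm
      · exact nd_1_11 h.symm
      · exact nd_2_11 h.symm
      · exact nd_3_11 h.symm
    have hn2 : ¬(M.σ q4 = M.σ q1 ∨ M.σ q4 = M.α q1) := by
      rintro (h|h)
      · exact nd_8_11 h.symm
      · exact nd_4_11 h.symm
    have hn3 : ¬(M.σ q4 = M.σ q2 ∨ M.σ q4 = M.α q4) := by
      rintro (h|h)
      · exact nd_9_11 h.symm
      · exact nd_7_11 h.symm
    have hn4 : ¬(M.σ q4 = M.σ q3 ∨ M.σ q4 = M.α q3) := by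
      rintro (h|h)
      · exact nd_10_11 h.symm
      · exact nd_6_11 h.symm
    simp only [hcdef]
    rw [if_neg hn1, if_neg hn2, if_neg hn3, if_neg hn4]
    simp
  have hcaq2 : c (M.α q2) = c' p3 := by
    have hn1 : ¬(M.α q2 = q1 ∨ M.α q2 = q2 ∨ M.α q2 = q3 ∨ M.α q2 = q4) := by
      rintro (h|h|h|h)
      · exact nd_0_5 h.symm
      · exact nd_1_5 h.symm
      · exact nd_2_5 h.symm
      · exact nd_3_5 h.symm
    have hn2 : ¬(M.α q2 = M.σ q1 ∨ M.α q2 = M.α q1) := by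
      rintro (h|h)
      · exact nd_5_8 h
      · exact nd_4_5 h.symm
    have hn3 : ¬(M.α q2 = M.σ q2 ∨ M.α q2 = M.α q4) := by
      rintro (h|h)
      · exact nd_5_9 h
      · exact nd_5_7 h
    have hn4 : ¬(M.α q2 = M.σ q3 ∨ M.α q2 = M.α q3) := by
      rintro (h|h)
      · exact nd_5_10 h
      · exact nd_5_6 h
    simp only [hcdef]
    rw [if_neg hn1, if_neg hn2, if_neg hn3, if_neg hn4]
    simp
  have hc_not : ∀ d, d ∉ S → c d = c' (Function.invFun ι d) := by
    intro d hd
    have hn1 : ¬(d = q1 ∨ d = q2 ∨ d = q3 ∨ d = q4) := by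
      rintro (rfl|rfl|rfl|rfl)
      · exact hd hq1S
      · exact hd hq2S
      · exact hd hq3S
      · exact hd hq4S
    have hn2 : ¬(d = M.σ q1 ∨ d = M.α q1) := by
      rintro (rfl|rfl)
      · exact hd hsq1S
      · exact hd haq1S
    have hn3 : ¬(d = M.σ q2 ∨ d = M.α q4) := by
      rintro (rfl|rfl)
      · exact hd hsq2S
      · exact hd haq4S
    have hn4 : ¬(d = M.σ q3 ∨ d = M.α q3) := by
      rintro (rfl|rfl)
      · exact hd hsq3S
      · exact hd haq3S
    have hn5 : ¬(d = M.σ q4 ∨ d = M.α q2) := by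
      rintro (rfl|rfl)
      · exact hd hsq4S
      · exact hd haq2S
    simp only [hcdef]
    rw [if_neg hn1, if_neg hn2, if_neg hn3, if_neg hn4, if_neg hn5]
  have hcιp1 : c (ι p1) = c' p1 := by rw [hc_not _ (hnotS p1), hinvι]
  have hcιp2 : c (ι p2) = c' p2 := by rw [hc_not _ (hnotS p2), hinvι]
  have hcιp3 : c (ι p3) = c' p3 := by rw [hc_not _ (hnotS p3), hinvι]
  have hcιp4 : c (ι p4) = c' p4 := by rw [hc_not _ (hnotS p4), hinvι]
  refine ⟨c, ?_, ?_⟩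
  · -- constancy on faces
    intro d
    by_cases hdS : d ∈ S
    · rw [hS] at hdS
      simp only [Finset.mem_insert, Finset.mem_singleton] at hdS
      rcases hdS with rfl|rfl|rfl|rfl|rfl|rfl|rfl|rfl|rfl|rfl|rfl|rfl
      · rw [hf1, hcq2, hcq1]
      · rw [hf2, hcq3, hcq2]
      · rw [hf3, hcq4, hcq3]
      · rw [hf4, hcq1, hcq4]
      · rw [hφ_αq1, hcsq1, hcaq1]
      · rw [hφ_αq2, hcsq2, hcaq2]; exact h13
      · rw [hφ_αq3, hcsq3, hcaq3]
      · rw [hφ_αq4, hcsq4, hcaq4]; exact h13.symm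
      · rw [hφ_sq1, hc_not _ (hnotS _), hinvι, ← hφ'p2, hcol.1 p2, hcsq1]
      · rw [hφ_sq2, hc_not _ (hnotS _), hinvι, ← hφ'p1, hcol.1 p1, hcsq2]
      · rw [hφ_sq3, hc_not _ (hnotS _), hinvι, ← hφ'p4, hcol.1 p4, hcsq3]
      · rw [hφ_sq4, hc_not _ (hnotS _), hinvι, ← hφ'p3, hcol.1 p3, hcsq4]
    · by_cases hd1 : d = ι p1
      · rw [hd1, hφ_ιp1, hcaq4, hcιp1]
      by_cases hd2 : d = ι p2
      · rw [hd2, hφ_ιp2, hcaq1, hcιp2]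
      by_cases hd3 : d = ι p3
      · rw [hd3, hφ_ιp3, hcaq2, hcιp3]
      by_cases hd4 : d = ι p4
      · rw [hd4, hφ_ιp4, hcaq3, hcιp4]
      · set d' := Function.invFun ι d with hd'def
        have hd' : ι d' = d := Function.invFun_eq ((hrange d).mpr hdS)
        have hne1 : d' ≠ p1 := fun h => hd1 (by rw [← hd', h])
        have hne2 : d' ≠ p2 := fun h => hd2 (by rw [← hd', h])
        have hne3 : d' ≠ p3 := fun h => hd3 (by rw [← hd', h])
        have hne4 : d' ≠ p4 := fun h => hd4 (by rw [← hd', h])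
        have hαd : M.α d = ι (M'.α d') := by
          have h := hα d' hne1 hne2 hne3 hne4
          rw [hd'] at h
          exact h.symm
        have hφd : M.φ d = ι (M'.φ d') := by
          rw [hφ_apply, hαd, ← hσ]
          rfl
        rw [hφd, hc_not _ (hnotS _), hinvι, hcol.1 d', hc_not d hdS]
  · -- proper on edges
    intro d
    by_cases hdS : d ∈ S
    · rw [hS] at hdS
      simp only [Finset.mem_insert, Finset.mem_singleton] at hdS
      rcases hdS with rfl|rfl|rfl|rfl|rfl|rfl|rfl|rfl|rfl|rfl|rfl|rfl
      · rw [hcq1, hcaq1]; exact ht2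
      · rw [hcq2, hcaq2, ← h13]; exact ht1
      · rw [hcq3, hcaq3]; exact ht4
      · rw [hcq4, hcaq4]; exact ht1
      · rw [hcaq1, hα_invol, hcq1]; exact ht2.symm
      · rw [hcaq2, hα_invol, hcq2, ← h13]; exact ht1.symm
      · rw [hcaq3, hα_invol, hcq3]; exact ht4.symm
      · rw [hcaq4, hα_invol, hcq4]; exact ht1.symm
      · rw [hcsq1, ← hp1, hcιp1]
        have h := hcol.2 p1
        rw [hα12] at h
        exact h.symm
      · rw [hcsq2, ← hp2, hcιp2]
        have h := hcol.2 p2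
        rw [hα21] at h
        exact h.symm
      · rw [hcsq3, ← hp3, hcιp3]
        have h := hcol.2 p3
        rw [hα34] at h
        exact h.symm
      · rw [hcsq4, ← hp4, hcιp4]
        have h := hcol.2 p4
        rw [hα43] at h
        exact h.symm
    · by_cases hd1 : d = ι p1
      · rw [hd1, hcιp1, hαιp1, hcsq1]
        have h := hcol.2 p1
        rwa [hα12] at h
      by_cases hd2 : d = ι p2
      · rw [hd2, hcιp2, hαιp2, hcsq2]
        have h := hcol.2 p2
        rwa [hα21] at h
      by_cases hd3 : d = ι p3
      · rw [hd3, hcιp3, hαιp3, hcsq3]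
        have h := hcol.2 p3
        rwa [hα34] at h
      by_cases hd4 : d = ι p4
      · rw [hd4, hcιp4, hαιp4, hcsq4]
        have h := hcol.2 p4
        rwa [hα43] at h
      · set d' := Function.invFun ι d with hd'def
        have hd' : ι d' = d := Function.invFun_eq ((hrange d).mpr hdS)
        have hne1 : d' ≠ p1 := fun h => hd1 (by rw [← hd', h])
        have hne2 : d' ≠ p2 := fun h => hd2 (by rw [← hd', h])
        have hne3 : d' ≠ p3 := fun h => hd3 (by rw [← hd', h])
        have hne4 : d' ≠ p4 := fun h => hd4 (by rw [← hd', h])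
        have hαd : M.α d = ι (M'.α d') := by
          have h := hα d' hne1 hne2 hne3 hne4
          rw [hd'] at h
          exact h.symm
        rw [hαd, hc_not _ (hnotS _), hinvι, hc_not d hdS]
        exact hcol.2 d'

end QuadRed
end

section
open Equiv Equiv.Perm
namespace QuadRed
variable {D : Type*} [Fintype D] [DecidableEq D]

lemma color_const {β : Type*} (f : Perm D) (c : D → β) (hc : ∀ d, c (f d) = c d)
    {x y : D} (h : f.SameCycle x y) : c x = c y := by
  obtain ⟨n, rfl⟩ := sc_pow.mp h
  clear h
  induction n with
  | zero => rfl
  | succ n ih => rw [pow_succ_apply, hc]; exact ih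

lemma rch_phi (σα σα2 : Perm D) (e : D) : Rch σα σα2 e ((σα * σα2) e) :=
  Relation.ReflTransGen.tail (Relation.ReflTransGen.single (Or.inr rfl)) (Or.inl rfl)

end QuadRed
end

/-- **Reducibility of the quadrilateral.**  Let `M` be a cubic plane graph with a
quadrilateral face with boundary darts `q1, q2, q3, q4` (a `φ`-cycle).  The external
darts at the four quadrilateral vertices are `σ q1, …, σ q4`.  Let `M'` be the
smaller cubic plane graph obtained by deleting the quadrilateral: its darts are
those of `M` outside the twelve darts
`S = {q1, …, q4, α q1, …, α q4, σ q1, …, σ q4}` (via the injection `ι`), with the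
same rotations, and the four boundary edges joined crossing-free in adjacent pairs:
the far ends `α (σ q1), α (σ q2)` are merged into one edge, as are
`α (σ q3), α (σ q4)`.  If `M'` is 4-face-colorable then so is `M`.
(Classically, not every 4-face-coloring of `M'` extends directly; in general one
must first perform a Kempe switch — this proof-method caveat is not part of the
formal mathematical content of the implication.) -/
theorem quadrilateral_reducible
    (M M' : CombMap) (hcub : M.Cubic) (hplanar : M.Planar)
    (q1 q2 q3 q4 : M.D)
    (hf1 : M.φ q1 = q2) (hf2 : M.φ q2 = q3) (hf3 : M.φ q3 = q4) (hf4 : M.φ q4 = q1)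
    (S : Finset M.D)
    (hS : S = {q1, q2, q3, q4, M.α q1, M.α q2, M.α q3, M.α q4,
               M.σ q1, M.σ q2, M.σ q3, M.σ q4})
    (hScard : S.card = 12)
    (hout1 : M.α (M.σ q1) ∉ S) (hout2 : M.α (M.σ q2) ∉ S)
    (hout3 : M.α (M.σ q3) ∉ S) (hout4 : M.α (M.σ q4) ∉ S)
    (ι : M'.D → M.D) (hι : Function.Injective ι)
    (hrange : ∀ d : M.D, d ∈ Set.range ι ↔ d ∉ S)
    (hσ : ∀ d', ι (M'.σ d') = M.σ (ι d'))
    (p1 p2 p3 p4 : M'.D)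
    (hp1 : ι p1 = M.α (M.σ q1)) (hp2 : ι p2 = M.α (M.σ q2))
    (hp3 : ι p3 = M.α (M.σ q3)) (hp4 : ι p4 = M.α (M.σ q4))
    (hα : ∀ d', d' ≠ p1 → d' ≠ p2 → d' ≠ p3 → d' ≠ p4 → ι (M'.α d') = M.α (ι d'))
    (hα12 : M'.α p1 = p2) (hα34 : M'.α p3 = p4)
    (h4 : ∃ c : M'.D → Fin 4, M'.FaceColoring 4 c) :
    ∃ c : M.D → Fin 4, M.FaceColoring 4 c := by
  classical
  obtain ⟨c', hcol⟩ := h4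
  have hnM' : Nonempty M'.D := ⟨p1⟩
  have hα_invol := M.α_invol
  have hσ3 := hcub.1
  have hφ_apply : ∀ d, M.φ d = M.σ (M.α d) := fun d => rfl
  have hαq1 : M.α q1 = M.σ (M.σ q2) := by
    have h := hf1; rw [hφ_apply] at h
    calc M.α q1 = M.σ (M.σ (M.σ (M.α q1))) := (hσ3 _).symm
    _ = M.σ (M.σ q2) := by rw [h]
  have hαq2 : M.α q2 = M.σ (M.σ q3) := by
    have h := hf2; rw [hφ_apply] at h
    calc M.α q2 = M.σ (M.σ (M.σ (M.α q2))) := (hσ3 _).symm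
    _ = M.σ (M.σ q3) := by rw [h]
  have hαq3 : M.α q3 = M.σ (M.σ q4) := by
    have h := hf3; rw [hφ_apply] at h
    calc M.α q3 = M.σ (M.σ (M.σ (M.α q3))) := (hσ3 _).symm
    _ = M.σ (M.σ q4) := by rw [h]
  have hαq4 : M.α q4 = M.σ (M.σ q1) := by
    have h := hf4; rw [hφ_apply] at h
    calc M.α q4 = M.σ (M.σ (M.σ (M.α q4))) := (hσ3 _).symm
    _ = M.σ (M.σ q1) := by rw [h]
  have hq1S : q1 ∈ S := by rw [hS]; simp
  have hq2S : q2 ∈ S := by rw [hS]; simp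
  have hq3S : q3 ∈ S := by rw [hS]; simp
  have hq4S : q4 ∈ S := by rw [hS]; simp
  have haq1S : M.α q1 ∈ S := by rw [hS]; simp
  have haq2S : M.α q2 ∈ S := by rw [hS]; simp
  have haq3S : M.α q3 ∈ S := by rw [hS]; simp
  have haq4S : M.α q4 ∈ S := by rw [hS]; simp
  have hsq1S : M.σ q1 ∈ S := by rw [hS]; simp
  have hsq2S : M.σ q2 ∈ S := by rw [hS]; simp
  have hsq3S : M.σ q3 ∈ S := by rw [hS]; simp
  have hsq4S : M.σ q4 ∈ S := by rw [hS]; simp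
  have hnotS : ∀ z : M'.D, ι z ∉ S := fun z => (hrange (ι z)).mp ⟨z, rfl⟩
  have hιne : ∀ (z : M'.D) (x : M.D), x ∈ S → ι z ≠ x := fun z x hx h => hnotS z (h ▸ hx)
  have hSl : S = ([q1, q2, q3, q4, M.α q1, M.α q2, M.α q3, M.α q4, M.σ q1, M.σ q2, M.σ q3, M.σ q4] : List M.D).toFinset := by
    rw [hS]; simp
  have hlcard : ([q1, q2, q3, q4, M.α q1, M.α q2, M.α q3, M.α q4, M.σ q1, M.σ q2, M.σ q3, M.σ q4] : List M.D).toFinset.card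
      = ([q1, q2, q3, q4, M.α q1, M.α q2, M.α q3, M.α q4, M.σ q1, M.σ q2, M.σ q3, M.σ q4] : List M.D).length := by rw [← hSl, hScard]; rfl
  rw [List.card_toFinset] at hlcard
  have hnodup : ([q1, q2, q3, q4, M.α q1, M.α q2, M.α q3, M.α q4, M.σ q1, M.σ q2, M.σ q3, M.σ q4] : List M.D).Nodup :=
    List.dedup_eq_self.mp (List.Sublist.eq_of_length (List.dedup_sublist _) hlcard)
  simp only [List.nodup_cons, List.mem_cons, List.mem_singleton, List.not_mem_nil, or_false,
    not_or, and_true, List.nodup_nil] at hnodup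
  obtain ⟨⟨nd_0_1, nd_0_2, nd_0_3, nd_0_4, nd_0_5, nd_0_6, nd_0_7, nd_0_8, nd_0_9, nd_0_10, nd_0_11⟩, ⟨nd_1_2, nd_1_3, nd_1_4, nd_1_5, nd_1_6, nd_1_7, nd_1_8, nd_1_9, nd_1_10, nd_1_11⟩, ⟨nd_2_3, nd_2_4, nd_2_5, nd_2_6, nd_2_7, nd_2_8, nd_2_9, nd_2_10, nd_2_11⟩, ⟨nd_3_4, nd_3_5, nd_3_6, nd_3_7, nd_3_8, nd_3_9, nd_3_10, nd_3_11⟩, ⟨nd_4_5, nd_4_6, nd_4_7, nd_4_8, nd_4_9, nd_4_10, nd_4_11⟩, ⟨nd_5_6, nd_5_7, nd_5_8, nd_5_9, nd_5_10, nd_5_11⟩, ⟨nd_6_7, nd_6_8, nd_6_9, nd_6_10, nd_6_11⟩, ⟨nd_7_8, nd_7_9, nd_7_10, nd_7_11⟩, ⟨nd_8_9, nd_8_10, nd_8_11⟩, ⟨nd_9_10, nd_9_11⟩, ⟨nd_10_11, -⟩⟩ := hnodup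
  have hα21 : M'.α p2 = p1 := by rw [← hα12, M'.α_invol]
  have hα43 : M'.α p4 = p3 := by rw [← hα34, M'.α_invol]
  have hφ'_apply : ∀ d', M'.φ d' = M'.σ (M'.α d') := fun d' => rfl
  have hφ'p1 : M'.φ p1 = M'.σ p2 := by rw [hφ'_apply, hα12]
  have hφ'p2 : M'.φ p2 = M'.σ p1 := by rw [hφ'_apply, hα21]
  have hφ'p3 : M'.φ p3 = M'.σ p4 := by rw [hφ'_apply, hα34]
  have hφ'p4 : M'.φ p4 = M'.σ p3 := by rw [hφ'_apply, hα43]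
  have hφ_sq1 : M.φ (M.σ q1) = ι (M'.σ p1) := by
    rw [hφ_apply, ← hp1]; exact (hσ p1).symm
  have hφ_sq2 : M.φ (M.σ q2) = ι (M'.σ p2) := by
    rw [hφ_apply, ← hp2]; exact (hσ p2).symm
  have hφ_sq3 : M.φ (M.σ q3) = ι (M'.σ p3) := by
    rw [hφ_apply, ← hp3]; exact (hσ p3).symm
  have hφ_sq4 : M.φ (M.σ q4) = ι (M'.σ p4) := by
    rw [hφ_apply, ← hp4]; exact (hσ p4).symm
  have hφ_ιp1 : M.φ (ι p1) = M.α q4 := by rw [hφ_apply, hp1, hα_invol, hαq4]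
  have hφ_ιp2 : M.φ (ι p2) = M.α q1 := by rw [hφ_apply, hp2, hα_invol, hαq1]
  have hφ_ιp3 : M.φ (ι p3) = M.α q2 := by rw [hφ_apply, hp3, hα_invol, hαq2]
  have hφ_ιp4 : M.φ (ι p4) = M.α q3 := by rw [hφ_apply, hp4, hα_invol, hαq3]
  have hφ_αq1 : M.φ (M.α q1) = M.σ q1 := by rw [hφ_apply, hα_invol]
  have hφ_αq2 : M.φ (M.α q2) = M.σ q2 := by rw [hφ_apply, hα_invol]
  have hφ_αq3 : M.φ (M.α q3) = M.σ q3 := by rw [hφ_apply, hα_invol]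
  have hφ_αq4 : M.φ (M.α q4) = M.σ q4 := by rw [hφ_apply, hα_invol]
  have hαιp1 : M.α (ι p1) = M.σ q1 := by rw [hp1, hα_invol]
  have hαιp2 : M.α (ι p2) = M.σ q2 := by rw [hp2, hα_invol]
  have hαιp3 : M.α (ι p3) = M.σ q3 := by rw [hp3, hα_invol]
  have hαιp4 : M.α (ι p4) = M.σ q4 := by rw [hp4, hα_invol]
  have hP12 : p1 ≠ p2 := fun h => nd_8_9 (M.α.injective (by rw [← hp1, ← hp2, h]))
  have hP13 : p1 ≠ p3 := fun h => nd_8_10 (M.α.injective (by rw [← hp1, ← hp3, h]))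
  have hP14 : p1 ≠ p4 := fun h => nd_8_11 (M.α.injective (by rw [← hp1, ← hp4, h]))
  have hP23 : p2 ≠ p3 := fun h => nd_9_10 (M.α.injective (by rw [← hp2, ← hp3, h]))
  have hP24 : p2 ≠ p4 := fun h => nd_9_11 (M.α.injective (by rw [← hp2, ← hp4, h]))
  have hP34 : p3 ≠ p4 := fun h => nd_10_11 (M.α.injective (by rw [← hp3, ← hp4, h]))
  have hιP : ∀ (z w : M'.D), z ≠ w → ι z ≠ ι w := fun z w h he => h (hι he)
  have hσ'P : ∀ (z w : M'.D), z ≠ w → M'.σ z ≠ M'.σ w := fun z w h he => h (M'.σ.injective he)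

  -- the two main cases
  by_cases hpc : QuadRed.Rch M'.σ M'.α p1 p3
  · -- p1 and p3 in the same component of M' : show their faces agree
    have hsc13 : M'.φ.SameCycle p1 p3 := by
      have swne : ∀ (a b x : M.D), x ≠ a → x ≠ b → Equiv.swap a b x = x :=
        fun a b x h1 h2 => Equiv.swap_apply_of_ne_of_ne h1 h2
      set A : Equiv.Perm M.D := Equiv.swap (M.σ q1) (ι p2) * (Equiv.swap (M.σ q2) (ι p1) *
        (Equiv.swap (M.σ q3) (ι p4) * (Equiv.swap (M.σ q4) (ι p3) * M.α))) with hAdef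
      have hA_apply : ∀ d, A d = Equiv.swap (M.σ q1) (ι p2) (Equiv.swap (M.σ q2) (ι p1)
          (Equiv.swap (M.σ q3) (ι p4) (Equiv.swap (M.σ q4) (ι p3) (M.α d)))) := fun d => rfl
      have hA_sq1 : A (M.σ q1) = M.σ q2 := by
        rw [hA_apply, ← hp1,
          swne _ _ _ (hιne p1 _ hsq4S) (hιP p1 p3 hP13),
          swne _ _ _ (hιne p1 _ hsq3S) (hιP p1 p4 hP14),
          Equiv.swap_apply_right,
          swne _ _ _ (Ne.symm nd_8_9) (hιne p2 _ hsq2S).symm]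
      have hA_sq2 : A (M.σ q2) = M.σ q1 := by
        rw [hA_apply, ← hp2,
          swne _ _ _ (hιne p2 _ hsq4S) (hιP p2 p3 hP23),
          swne _ _ _ (hιne p2 _ hsq3S) (hιP p2 p4 hP24),
          swne _ _ _ (hιne p2 _ hsq2S) (hιP p2 p1 hP12.symm),
          Equiv.swap_apply_right]
      have hA_sq3 : A (M.σ q3) = M.σ q4 := by
        rw [hA_apply, ← hp3, Equiv.swap_apply_right,
          swne _ _ _ (Ne.symm nd_10_11) (hιne p4 _ hsq4S).symm,
          swne _ _ _ (Ne.symm nd_9_11) (hιne p1 _ hsq4S).symm,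
          swne _ _ _ (Ne.symm nd_8_11) (hιne p2 _ hsq4S).symm]
      have hA_sq4 : A (M.σ q4) = M.σ q3 := by
        rw [hA_apply, ← hp4,
          swne _ _ _ (hιne p4 _ hsq4S) (hιP p4 p3 hP34.symm),
          Equiv.swap_apply_right,
          swne _ _ _ (Ne.symm nd_9_10) (hιne p1 _ hsq3S).symm,
          swne _ _ _ (Ne.symm nd_8_10) (hιne p2 _ hsq3S).symm]
      have hA_ιp1 : A (ι p1) = ι p2 := by
        rw [hA_apply, hαιp1,
          swne _ _ _ nd_8_11 (hιne p3 _ hsq1S).symm,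
          swne _ _ _ nd_8_10 (hιne p4 _ hsq1S).symm,
          swne _ _ _ nd_8_9 (hιne p1 _ hsq1S).symm,
          Equiv.swap_apply_left]
      have hA_ιp2 : A (ι p2) = ι p1 := by
        rw [hA_apply, hαιp2,
          swne _ _ _ nd_9_11 (hιne p3 _ hsq2S).symm,
          swne _ _ _ nd_9_10 (hιne p4 _ hsq2S).symm,
          Equiv.swap_apply_left,
          swne _ _ _ (hιne p1 _ hsq1S) (hιP p1 p2 hP12)]
      have hA_ιp3 : A (ι p3) = ι p4 := by
        rw [hA_apply, hαιp3,
          swne _ _ _ nd_10_11 (hιne p3 _ hsq3S).symm,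
          Equiv.swap_apply_left,
          swne _ _ _ (hιne p4 _ hsq2S) (hιP p4 p1 hP14.symm),
          swne _ _ _ (hιne p4 _ hsq1S) (hιP p4 p2 hP24.symm)]
      have hA_ιp4 : A (ι p4) = ι p3 := by
        rw [hA_apply, hαιp4, Equiv.swap_apply_left,
          swne _ _ _ (hιne p3 _ hsq3S) (hιP p3 p4 hP34),
          swne _ _ _ (hιne p3 _ hsq2S) (hιP p3 p1 hP13.symm),
          swne _ _ _ (hιne p3 _ hsq1S) (hιP p3 p2 hP23.symm)]
      have hA_other : ∀ d, d ≠ M.σ q1 → d ≠ M.σ q2 → d ≠ M.σ q3 → d ≠ M.σ q4 →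
          d ≠ ι p1 → d ≠ ι p2 → d ≠ ι p3 → d ≠ ι p4 → A d = M.α d := by
        intro d h1 h2 h3 h4 h5 h6 h7 h8
        have e1 : M.α d ≠ M.σ q1 := fun h => h5 (by rw [hp1, ← h, hα_invol])
        have e2 : M.α d ≠ M.σ q2 := fun h => h6 (by rw [hp2, ← h, hα_invol])
        have e3 : M.α d ≠ M.σ q3 := fun h => h7 (by rw [hp3, ← h, hα_invol])
        have e4 : M.α d ≠ M.σ q4 := fun h => h8 (by rw [hp4, ← h, hα_invol])
        have f1 : M.α d ≠ ι p1 := fun h => h1 (M.α.injective (by rw [h, hp1]))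
        have f2 : M.α d ≠ ι p2 := fun h => h2 (M.α.injective (by rw [h, hp2]))
        have f3 : M.α d ≠ ι p3 := fun h => h3 (M.α.injective (by rw [h, hp3]))
        have f4 : M.α d ≠ ι p4 := fun h => h4 (M.α.injective (by rw [h, hp4]))
        rw [hA_apply, swne _ _ _ e4 f3, swne _ _ _ e3 f4, swne _ _ _ e2 f1, swne _ _ _ e1 f2]
      have hA_invol : ∀ d, A (A d) = d := by
        intro d
        by_cases h1 : d = M.σ q1
        · rw [h1, hA_sq1, hA_sq2]
        by_cases h2 : d = M.σ q2
        · rw [h2, hA_sq2, hA_sq1]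
        by_cases h3 : d = M.σ q3
        · rw [h3, hA_sq3, hA_sq4]
        by_cases h4 : d = M.σ q4
        · rw [h4, hA_sq4, hA_sq3]
        by_cases h5 : d = ι p1
        · rw [h5, hA_ιp1, hA_ιp2]
        by_cases h6 : d = ι p2
        · rw [h6, hA_ιp2, hA_ιp1]
        by_cases h7 : d = ι p3
        · rw [h7, hA_ιp3, hA_ιp4]
        by_cases h8 : d = ι p4
        · rw [h8, hA_ιp4, hA_ιp3]
        · have hAd : A d = M.α d := hA_other d h1 h2 h3 h4 h5 h6 h7 h8
          have g1 : M.α d ≠ M.σ q1 := fun h => h5 (by rw [hp1, ← h, hα_invol])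
          have g2 : M.α d ≠ M.σ q2 := fun h => h6 (by rw [hp2, ← h, hα_invol])
          have g3 : M.α d ≠ M.σ q3 := fun h => h7 (by rw [hp3, ← h, hα_invol])
          have g4 : M.α d ≠ M.σ q4 := fun h => h8 (by rw [hp4, ← h, hα_invol])
          have g5 : M.α d ≠ ι p1 := fun h => h1 (M.α.injective (by rw [h, hp1]))
          have g6 : M.α d ≠ ι p2 := fun h => h2 (M.α.injective (by rw [h, hp2]))
          have g7 : M.α d ≠ ι p3 := fun h => h3 (M.α.injective (by rw [h, hp3]))
          have g8 : M.α d ≠ ι p4 := fun h => h4 (M.α.injective (by rw [h, hp4]))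
          rw [hAd, hA_other _ g1 g2 g3 g4 g5 g6 g7 g8, hα_invol]
      have hA_fpf : ∀ d, A d ≠ d := by
        intro d
        by_cases h1 : d = M.σ q1
        · rw [h1, hA_sq1]; exact (Ne.symm nd_8_9)
        by_cases h2 : d = M.σ q2
        · rw [h2, hA_sq2]; exact nd_8_9
        by_cases h3 : d = M.σ q3
        · rw [h3, hA_sq3]; exact (Ne.symm nd_10_11)
        by_cases h4 : d = M.σ q4
        · rw [h4, hA_sq4]; exact nd_10_11
        by_cases h5 : d = ι p1
        · rw [h5, hA_ιp1]; exact hιP p2 p1 hP12.symm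
        by_cases h6 : d = ι p2
        · rw [h6, hA_ιp2]; exact hιP p1 p2 hP12
        by_cases h7 : d = ι p3
        · rw [h7, hA_ιp3]; exact hιP p4 p3 hP34.symm
        by_cases h8 : d = ι p4
        · rw [h8, hA_ιp4]; exact hιP p3 p4 hP34
        · rw [hA_other d h1 h2 h3 h4 h5 h6 h7 h8]; exact M.α_fpf d
      have hA_ι : ∀ e', A (ι e') = ι (M'.α e') := by
        intro e'
        by_cases h1 : e' = p1
        · rw [h1, hA_ιp1, hα12]
        by_cases h2 : e' = p2
        · rw [h2, hA_ιp2, hα21]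
        by_cases h3 : e' = p3
        · rw [h3, hA_ιp3, hα34]
        by_cases h4 : e' = p4
        · rw [h4, hA_ιp4, hα43]
        · rw [hA_other _ (hιne e' _ hsq1S) (hιne e' _ hsq2S) (hιne e' _ hsq3S)
            (hιne e' _ hsq4S) (hιP e' p1 h1) (hιP e' p2 h2) (hιP e' p3 h3) (hιP e' p4 h4)]
          exact (hα e' h1 h2 h3 h4).symm
      set φT : Equiv.Perm M.D := M.σ * A with hφTdef
      have hφT_ι : ∀ e', φT (ι e') = ι (M'.φ e') := by
        intro e'
        show M.σ (A (ι e')) = ι (M'.σ (M'.α e'))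
        rw [hA_ι, hσ]
      set ψ1 : Equiv.Perm M.D := Equiv.swap (M.α q3) (ι (M'.σ p3)) * M.φ with hψ1def
      set ψ2 : Equiv.Perm M.D := Equiv.swap (M.α q1) (ι (M'.σ p1)) * ψ1 with hψ2def
      have hψ1_apply : ∀ d, ψ1 d = Equiv.swap (M.α q3) (ι (M'.σ p3)) (M.φ d) := fun d => rfl
      have hψ2_apply : ∀ d, ψ2 d = Equiv.swap (M.α q1) (ι (M'.σ p1))
          (Equiv.swap (M.α q3) (ι (M'.σ p3)) (M.φ d)) := fun d => rfl
      have hφT_eq : φT = Equiv.swap (M.α q2) (ι (M'.σ p4)) *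
          (Equiv.swap (M.α q4) (ι (M'.σ p2)) * ψ2) := by
        ext d
        show M.σ (A d) = Equiv.swap (M.α q2) (ι (M'.σ p4)) (Equiv.swap (M.α q4) (ι (M'.σ p2))
          (Equiv.swap (M.α q1) (ι (M'.σ p1)) (Equiv.swap (M.α q3) (ι (M'.σ p3)) (M.φ d))))
        by_cases hs1 : d = M.σ q1
        · rw [hs1, hA_sq1, hφ_sq1,
            swne _ _ _ (hιne (M'.σ p1) _ haq3S) (hιP _ _ (hσ'P _ _ hP13)),
            Equiv.swap_apply_right (M.α q1) (ι (M'.σ p1)),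
            swne _ _ _ nd_4_7 (hιne (M'.σ p2) _ haq1S).symm,
            swne _ _ _ nd_4_5 (hιne (M'.σ p4) _ haq1S).symm, ← hαq1]
        by_cases hs2 : d = M.σ q2
        · rw [hs2, hA_sq2, hφ_sq2,
            swne _ _ _ (hιne (M'.σ p2) _ haq3S) (hιP _ _ (hσ'P _ _ hP23)),
            swne _ _ _ (hιne (M'.σ p2) _ haq1S) (hιP _ _ (hσ'P _ _ hP12.symm)),
            Equiv.swap_apply_right (M.α q4) (ι (M'.σ p2)),
            swne _ _ _ (Ne.symm nd_5_7) (hιne (M'.σ p4) _ haq4S).symm, ← hαq4]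
        by_cases hs3 : d = M.σ q3
        · rw [hs3, hA_sq3, hφ_sq3,
            Equiv.swap_apply_right (M.α q3) (ι (M'.σ p3)),
            swne _ _ _ (Ne.symm nd_4_6) (hιne (M'.σ p1) _ haq3S).symm,
            swne _ _ _ nd_6_7 (hιne (M'.σ p2) _ haq3S).symm,
            swne _ _ _ (Ne.symm nd_5_6) (hιne (M'.σ p4) _ haq3S).symm, ← hαq3]
        by_cases hs4 : d = M.σ q4
        · rw [hs4, hA_sq4, hφ_sq4,
            swne _ _ _ (hιne (M'.σ p4) _ haq3S) (hιP _ _ (hσ'P _ _ hP34.symm)),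
            swne _ _ _ (hιne (M'.σ p4) _ haq1S) (hιP _ _ (hσ'P _ _ hP14.symm)),
            swne _ _ _ (hιne (M'.σ p4) _ haq4S) (hιP _ _ (hσ'P _ _ hP24.symm)),
            Equiv.swap_apply_right (M.α q2) (ι (M'.σ p4)), ← hαq2]
        by_cases hi1 : d = ι p1
        · rw [hi1, hA_ιp1, hφ_ιp1,
            swne _ _ _ (Ne.symm nd_6_7) (hιne (M'.σ p3) _ haq4S).symm,
            swne _ _ _ (Ne.symm nd_4_7) (hιne (M'.σ p1) _ haq4S).symm,
            Equiv.swap_apply_left (M.α q4) (ι (M'.σ p2)),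
            swne _ _ _ (hιne (M'.σ p2) _ haq2S) (hιP _ _ (hσ'P _ _ hP24)),
            hσ p2]
        by_cases hi2 : d = ι p2
        · rw [hi2, hA_ιp2, hφ_ιp2,
            swne _ _ _ nd_4_6 (hιne (M'.σ p3) _ haq1S).symm,
            Equiv.swap_apply_left (M.α q1) (ι (M'.σ p1)),
            swne _ _ _ (hιne (M'.σ p1) _ haq4S) (hιP _ _ (hσ'P _ _ hP12)),
            swne _ _ _ (hιne (M'.σ p1) _ haq2S) (hιP _ _ (hσ'P _ _ hP14)),
            hσ p1]
        by_cases hi3 : d = ι p3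
        · rw [hi3, hA_ιp3, hφ_ιp3,
            swne _ _ _ nd_5_6 (hιne (M'.σ p3) _ haq2S).symm,
            swne _ _ _ (Ne.symm nd_4_5) (hιne (M'.σ p1) _ haq2S).symm,
            swne _ _ _ nd_5_7 (hιne (M'.σ p2) _ haq2S).symm,
            Equiv.swap_apply_left (M.α q2) (ι (M'.σ p4)),
            hσ p4]
        by_cases hi4 : d = ι p4
        · rw [hi4, hA_ιp4, hφ_ιp4,
            Equiv.swap_apply_left (M.α q3) (ι (M'.σ p3)),
            swne _ _ _ (hιne (M'.σ p3) _ haq1S) (hιP _ _ (hσ'P _ _ hP13.symm)),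
            swne _ _ _ (hιne (M'.σ p3) _ haq4S) (hιP _ _ (hσ'P _ _ hP23.symm)),
            swne _ _ _ (hιne (M'.σ p3) _ haq2S) (hιP _ _ (hσ'P _ _ hP34)),
            hσ p3]
        · have e1 : M.φ d ≠ M.α q3 := fun h => hi4 (M.φ.injective (h.trans hφ_ιp4.symm))
          have e2 : M.φ d ≠ ι (M'.σ p3) := fun h => hs3 (M.φ.injective (h.trans hφ_sq3.symm))
          have e3 : M.φ d ≠ M.α q1 := fun h => hi2 (M.φ.injective (h.trans hφ_ιp2.symm))
          have e4 : M.φ d ≠ ι (M'.σ p1) := fun h => hs1 (M.φ.injective (h.trans hφ_sq1.symm))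
          have e5 : M.φ d ≠ M.α q4 := fun h => hi1 (M.φ.injective (h.trans hφ_ιp1.symm))
          have e6 : M.φ d ≠ ι (M'.σ p2) := fun h => hs2 (M.φ.injective (h.trans hφ_sq2.symm))
          have e7 : M.φ d ≠ M.α q2 := fun h => hi3 (M.φ.injective (h.trans hφ_ιp3.symm))
          have e8 : M.φ d ≠ ι (M'.σ p4) := fun h => hs4 (M.φ.injective (h.trans hφ_sq4.symm))
          rw [hA_other d hs1 hs2 hs3 hs4 hi1 hi2 hi3 hi4, swne _ _ _ e1 e2, swne _ _ _ e3 e4,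
            swne _ _ _ e5 e6, swne _ _ _ e7 e8, hφ_apply]
      -- values of ψ2 at key points
      have hg_ιp1 : ψ2 (ι p1) = M.α q4 := by
        rw [hψ2_apply, hφ_ιp1,
          swne _ _ _ (Ne.symm nd_6_7) (hιne (M'.σ p3) _ haq4S).symm,
          swne _ _ _ (Ne.symm nd_4_7) (hιne (M'.σ p1) _ haq4S).symm]
      have hg_σq2 : ψ2 (M.σ q2) = ι (M'.σ p2) := by
        rw [hψ2_apply, hφ_sq2,
          swne _ _ _ (hιne (M'.σ p2) _ haq3S) (hιP _ _ (hσ'P _ _ hP23)),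
          swne _ _ _ (hιne (M'.σ p2) _ haq1S) (hιP _ _ (hσ'P _ _ hP12.symm))]
      have hg_ιp3 : ψ2 (ι p3) = M.α q2 := by
        rw [hψ2_apply, hφ_ιp3,
          swne _ _ _ nd_5_6 (hιne (M'.σ p3) _ haq2S).symm,
          swne _ _ _ (Ne.symm nd_4_5) (hιne (M'.σ p1) _ haq2S).symm]
      have hg_σq4 : ψ2 (M.σ q4) = ι (M'.σ p4) := by
        rw [hψ2_apply, hφ_sq4,
          swne _ _ _ (hιne (M'.σ p4) _ haq3S) (hιP _ _ (hσ'P _ _ hP34.symm)),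
          swne _ _ _ (hιne (M'.σ p4) _ haq1S) (hιP _ _ (hσ'P _ _ hP14.symm))]
      have hg_αq4 : ψ2 (M.α q4) = M.σ q4 := by
        rw [hψ2_apply, hφ_αq4,
          swne _ _ _ (Ne.symm nd_6_11) (hιne (M'.σ p3) _ hsq4S).symm,
          swne _ _ _ (Ne.symm nd_4_11) (hιne (M'.σ p1) _ hsq4S).symm]
      have hg_αq2 : ψ2 (M.α q2) = M.σ q2 := by
        rw [hψ2_apply, hφ_αq2,
          swne _ _ _ (Ne.symm nd_6_9) (hιne (M'.σ p3) _ hsq2S).symm,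
          swne _ _ _ (Ne.symm nd_4_9) (hιne (M'.σ p1) _ hsq2S).symm]
      -- the two unconditional splittings
      have hsc1 : M.φ.SameCycle (M.α q3) (ι (M'.σ p3)) := by
        have h := (QuadRed.sc_apply_self (f := M.φ) (M.α q3)).trans
          (QuadRed.sc_apply_self (f := M.φ) (M.φ (M.α q3)))
        rwa [hφ_αq3, hφ_sq3] at h
      have hn1 : QuadRed.ncyc ψ1 = QuadRed.ncyc M.φ + 1 := by
        rw [hψ1def]
        exact QuadRed.split_ncyc (Ne.symm (hιne (M'.σ p3) _ haq3S)) hsc1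
      have hsc2 : ψ1.SameCycle (M.α q1) (ι (M'.σ p1)) := by
        have h := (QuadRed.sc_apply_self (f := ψ1) (M.α q1)).trans
          (QuadRed.sc_apply_self (f := ψ1) (ψ1 (M.α q1)))
        have v1 : ψ1 (M.α q1) = M.σ q1 := by
          rw [hψ1_apply, hφ_αq1,
            swne _ _ _ (Ne.symm nd_6_8) (hιne (M'.σ p3) _ hsq1S).symm]
        have v2 : ψ1 (M.σ q1) = ι (M'.σ p1) := by
          rw [hψ1_apply, hφ_sq1,
            swne _ _ _ (hιne (M'.σ p1) _ haq3S) (hιP _ _ (hσ'P _ _ hP13))]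
        rwa [v1, v2] at h
      have hn2 : QuadRed.ncyc ψ2 = QuadRed.ncyc ψ1 + 1 := by
        rw [hψ2def]
        exact QuadRed.split_ncyc (Ne.symm (hιne (M'.σ p1) _ haq1S)) hsc2
      by_cases hb : ψ2.SameCycle (M.α q4) (ι (M'.σ p2))
      · -- Case where u1 also splits: contradiction with Euler's formula
        exfalso
        set ψ3 : Equiv.Perm M.D := Equiv.swap (M.α q4) (ι (M'.σ p2)) * ψ2 with hψ3def
        have hn3 : QuadRed.ncyc ψ3 = QuadRed.ncyc ψ2 + 1 := by
          rw [hψ3def]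
          exact QuadRed.split_ncyc (Ne.symm (hιne (M'.σ p2) _ haq4S)) hb
        have hψ3_apply : ∀ d, ψ3 d = Equiv.swap (M.α q4) (ι (M'.σ p2)) (ψ2 d) := fun d => rfl
        have v1 : ψ3 (M.α q2) = M.σ q2 := by
          rw [hψ3_apply, hg_αq2, swne _ _ _ (Ne.symm nd_7_9) (hιne (M'.σ p2) _ hsq2S).symm]
        have v2 : ψ3 (M.σ q2) = M.α q4 := by
          rw [hψ3_apply, hg_σq2, Equiv.swap_apply_right]
        have v3 : ψ3 (M.α q4) = M.σ q4 := by
          rw [hψ3_apply, hg_αq4, swne _ _ _ (Ne.symm nd_7_11) (hιne (M'.σ p2) _ hsq4S).symm]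
        have v4 : ψ3 (M.σ q4) = ι (M'.σ p4) := by
          rw [hψ3_apply, hg_σq4, swne _ _ _ (hιne (M'.σ p4) _ haq4S)
            (hιP _ _ (hσ'P _ _ hP24.symm))]
        have hsc4 : ψ3.SameCycle (M.α q2) (ι (M'.σ p4)) := by
          have h := (((QuadRed.sc_apply_self (f := ψ3) (M.α q2)).trans
            (QuadRed.sc_apply_self (f := ψ3) _)).trans
            (QuadRed.sc_apply_self (f := ψ3) _)).trans
            (QuadRed.sc_apply_self (f := ψ3) _)
          rwa [v1, v2, v3, v4] at h
        have hn4 : QuadRed.ncyc φT = QuadRed.ncyc ψ3 + 1 := by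
          rw [hφT_eq]
          exact QuadRed.split_ncyc (Ne.symm (hιne (M'.σ p4) _ haq2S)) hsc4
        have hσ'3 : ∀ e', M'.σ (M'.σ (M'.σ e')) = e' := fun e' => hι (by
          rw [hσ, hσ, hσ]; exact hσ3 _)
        have hRp1 : QuadRed.Rch M'.σ M'.α p1 p1 := Relation.ReflTransGen.refl
        have hRp2 : QuadRed.Rch M'.σ M'.α p2 p1 := Relation.ReflTransGen.single (Or.inr hα21)
        have hRp3 : QuadRed.Rch M'.σ M'.α p3 p1 := QuadRed.rch_symm hpc
        have hRp4 : QuadRed.Rch M'.σ M'.α p4 p1 :=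
          Relation.ReflTransGen.trans (Relation.ReflTransGen.single (Or.inr hα43)) hRp3
        have hback : ∀ x y : M.D, (M.σ x = y ∨ M.α x = y) →
            (y ∈ S ∨ ∃ e', ι e' = y ∧ QuadRed.Rch M'.σ M'.α e' p1) →
            (x ∈ S ∨ ∃ e', ι e' = x ∧ QuadRed.Rch M'.σ M'.α e' p1) := by
          rintro x y (hxy | hxy) hy
          · rcases hy with hyS | ⟨e', he, hre'⟩
            · left
              have hx : x = M.σ (M.σ y) := by rw [← hxy]; exact (hσ3 x).symm
              rw [hS] at hyS
              simp only [Finset.mem_insert, Finset.mem_singleton] at hyS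
              rcases hyS with rfl|rfl|rfl|rfl|rfl|rfl|rfl|rfl|rfl|rfl|rfl|rfl
              · rw [hx, ← hαq4]; exact haq4S
              · rw [hx, ← hαq1]; exact haq1S
              · rw [hx, ← hαq2]; exact haq2S
              · rw [hx, ← hαq3]; exact haq3S
              · rw [hx, hαq1, hσ3]; exact hsq2S
              · rw [hx, hαq2, hσ3]; exact hsq3S
              · rw [hx, hαq3, hσ3]; exact hsq4S
              · rw [hx, hαq4, hσ3]; exact hsq1S
              · rw [hx, hσ3]; exact hq1S
              · rw [hx, hσ3]; exact hq2S
              · rw [hx, hσ3]; exact hq3S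
              · rw [hx, hσ3]; exact hq4S
            · right
              refine ⟨M'.σ (M'.σ e'), ?_, ?_⟩
              · rw [hσ, hσ, he, ← hxy]; exact hσ3 x
              · exact Relation.ReflTransGen.trans
                  (Relation.ReflTransGen.single (Or.inl (hσ'3 e'))) hre'
          · rcases hy with hyS | ⟨e', he, hre'⟩
            · have hx : x = M.α y := by rw [← hxy, hα_invol]
              rw [hS] at hyS
              simp only [Finset.mem_insert, Finset.mem_singleton] at hyS
              rcases hyS with rfl|rfl|rfl|rfl|rfl|rfl|rfl|rfl|rfl|rfl|rfl|rfl
              · left; rw [hx]; exact haq1S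
              · left; rw [hx]; exact haq2S
              · left; rw [hx]; exact haq3S
              · left; rw [hx]; exact haq4S
              · left; rw [hx, hα_invol]; exact hq1S
              · left; rw [hx, hα_invol]; exact hq2S
              · left; rw [hx, hα_invol]; exact hq3S
              · left; rw [hx, hα_invol]; exact hq4S
              · exact Or.inr ⟨p1, by rw [hp1, hx], hRp1⟩
              · exact Or.inr ⟨p2, by rw [hp2, hx], hRp2⟩
              · exact Or.inr ⟨p3, by rw [hp3, hx], hRp3⟩
              · exact Or.inr ⟨p4, by rw [hp4, hx], hRp4⟩
            · by_cases h1 : e' = p1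
              · left
                have hx : x = M.σ q1 := by
                  rw [← hα_invol x, hxy, ← he, h1, hαιp1]
                rw [hx]; exact hsq1S
              by_cases h2 : e' = p2
              · left
                have hx : x = M.σ q2 := by
                  rw [← hα_invol x, hxy, ← he, h2, hαιp2]
                rw [hx]; exact hsq2S
              by_cases h3 : e' = p3
              · left
                have hx : x = M.σ q3 := by
                  rw [← hα_invol x, hxy, ← he, h3, hαιp3]
                rw [hx]; exact hsq3S
              by_cases h4 : e' = p4
              · left
                have hx : x = M.σ q4 := by
                  rw [← hα_invol x, hxy, ← he, h4, hαιp4]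
                rw [hx]; exact hsq4S
              · refine Or.inr ⟨M'.α e', ?_, ?_⟩
                · rw [hα e' h1 h2 h3 h4, he, ← hxy, hα_invol]
                · exact Relation.ReflTransGen.trans
                    (Relation.ReflTransGen.single (Or.inr (M'.α_invol e'))) hre'
        have hPall : ∀ d : M.D, d ∈ S ∨ ∃ e', ι e' = d ∧ QuadRed.Rch M'.σ M'.α e' p1 := by
          intro d
          have hcon := hplanar.1 d q1
          induction hcon using Relation.ReflTransGen.head_induction_on with
          | refl => exact Or.inl hq1S
          | head hstep _ ih => exact hback _ _ hstep ih
        have hall : ∀ e', QuadRed.Rch M'.σ M'.α e' p1 := by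
          intro e'
          rcases hPall (ι e') with h | ⟨f', hf, hr⟩
          · exact absurd h (hnotS e')
          · exact (hι hf) ▸ hr
        have hAq1 : A q1 = M.α q1 := hA_other q1 nd_0_8 nd_0_9 nd_0_10 nd_0_11
          (hιne p1 _ hq1S).symm (hιne p2 _ hq1S).symm (hιne p3 _ hq1S).symm
          (hιne p4 _ hq1S).symm
        have hAq2 : A q2 = M.α q2 := hA_other q2 nd_1_8 nd_1_9 nd_1_10 nd_1_11
          (hιne p1 _ hq2S).symm (hιne p2 _ hq2S).symm (hιne p3 _ hq2S).symm
          (hιne p4 _ hq2S).symm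
        have hAq3 : A q3 = M.α q3 := hA_other q3 nd_2_8 nd_2_9 nd_2_10 nd_2_11
          (hιne p1 _ hq3S).symm (hιne p2 _ hq3S).symm (hιne p3 _ hq3S).symm
          (hιne p4 _ hq3S).symm
        have hAq4 : A q4 = M.α q4 := hA_other q4 nd_3_8 nd_3_9 nd_3_10 nd_3_11
          (hιne p1 _ hq4S).symm (hιne p2 _ hq4S).symm (hιne p3 _ hq4S).symm
          (hιne p4 _ hq4S).symm
        have hre : ∀ d, QuadRed.Rch M.σ A d q1 ∨ QuadRed.Rch M.σ A d (ι p1) := by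
          intro d
          by_cases hdS : d ∈ S
          · left
            have hq1c : QuadRed.Rch M.σ A q1 q1 := Relation.ReflTransGen.refl
            have hq4c : QuadRed.Rch M.σ A q4 q1 :=
              Relation.ReflTransGen.tail (Relation.ReflTransGen.single (Or.inr hAq4))
                (Or.inl (by rw [hαq4]; exact hσ3 q1))
            have hq3c : QuadRed.Rch M.σ A q3 q1 :=
              Relation.ReflTransGen.trans (Relation.ReflTransGen.tail
                (Relation.ReflTransGen.single (Or.inr hAq3))
                (Or.inl (by rw [hαq3]; exact hσ3 q4))) hq4c
            have hq2c : QuadRed.Rch M.σ A q2 q1 :=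
              Relation.ReflTransGen.trans (Relation.ReflTransGen.tail
                (Relation.ReflTransGen.single (Or.inr hAq2))
                (Or.inl (by rw [hαq2]; exact hσ3 q3))) hq3c
            have hv : ∀ z : M.D, QuadRed.Rch M.σ A (M.σ z) z :=
              fun z => Relation.ReflTransGen.tail
                (Relation.ReflTransGen.single (Or.inl rfl)) (Or.inl (hσ3 z))
            rw [hS] at hdS
            simp only [Finset.mem_insert, Finset.mem_singleton] at hdS
            rcases hdS with rfl|rfl|rfl|rfl|rfl|rfl|rfl|rfl|rfl|rfl|rfl|rfl
            · exact hq1c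
            · exact hq2c
            · exact hq3c
            · exact hq4c
            · exact Relation.ReflTransGen.trans (Relation.ReflTransGen.single
                (Or.inl (by rw [hαq1]; exact hσ3 q2))) hq2c
            · exact Relation.ReflTransGen.trans (Relation.ReflTransGen.single
                (Or.inl (by rw [hαq2]; exact hσ3 q3))) hq3c
            · exact Relation.ReflTransGen.trans (Relation.ReflTransGen.single
                (Or.inl (by rw [hαq3]; exact hσ3 q4))) hq4c
            · exact Relation.ReflTransGen.trans (Relation.ReflTransGen.single
                (Or.inl (by rw [hαq4]; exact hσ3 q1))) hq1c
            · exact hv q1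
            · exact Relation.ReflTransGen.trans (hv q2) hq2c
            · exact Relation.ReflTransGen.trans (hv q3) hq3c
            · exact Relation.ReflTransGen.trans (hv q4) hq4c
          · right
            obtain ⟨e', he⟩ := (hrange d).mpr hdS
            have hlift : ∀ (a b : M'.D), (M'.σ a = b ∨ M'.α a = b) →
                (M.σ (ι a) = ι b ∨ A (ι a) = ι b) := by
              rintro a b (rfl | rfl)
              · exact Or.inl (hσ a).symm
              · exact Or.inr (hA_ι a)
            have htr : ∀ {a b : M'.D}, QuadRed.Rch M'.σ M'.α a b →
                QuadRed.Rch M.σ A (ι a) (ι b) := by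
              intro a b h
              induction h with
              | refl => exact Relation.ReflTransGen.refl
              | tail _ hstep ih => exact Relation.ReflTransGen.tail ih (hlift _ _ hstep)
            rw [← he]
            exact htr (hall e')
        have heu := QuadRed.euler4 M.σ A hA_invol hA_fpf q1 (ι p1) hre
        have hσA : M.σ * A = φT := hφTdef.symm
        rw [hσA] at heu
        have hcA := QuadRed.card_eq_two_mul_ncyc_invol hA_invol hA_fpf
        have hcα := QuadRed.card_eq_two_mul_ncyc_invol M.α_invol M.α_fpf
        have hpl : QuadRed.ncyc M.σ + QuadRed.ncyc M.φ = QuadRed.ncyc M.α + 2 := hplanar.2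
        omega
      · -- The "merge" case : a direct walk exhibits the common face
        by_cases h32 : M'.σ p2 = p3
        · have h := QuadRed.sc_apply_self (f := M'.φ) p1
          rw [hφ'p1, h32] at h
          exact h
        by_cases h12 : M'.σ p2 = p1
        · exfalso
          have h := QuadRed.sc_apply_self (f := ψ2) (ι p1)
          rw [hg_ιp1] at h
          apply hb
          rw [h12]
          exact h.symm
        · have hφT_apply2 : ∀ d, φT d = Equiv.swap (M.α q2) (ι (M'.σ p4))
              (Equiv.swap (M.α q4) (ι (M'.σ p2)) (ψ2 d)) := by
            intro d; rw [hφT_eq]; rfl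
          have hagree : ∀ z, z ≠ ι p1 → z ≠ M.σ q2 → z ≠ ι p3 → z ≠ M.σ q4 → φT z = ψ2 z := by
            intro z h1 h2 h3 h4
            have e1 : ψ2 z ≠ M.α q4 := fun h => h1 (ψ2.injective (h.trans hg_ιp1.symm))
            have e2 : ψ2 z ≠ ι (M'.σ p2) := fun h => h2 (ψ2.injective (h.trans hg_σq2.symm))
            have e3 : ψ2 z ≠ M.α q2 := fun h => h3 (ψ2.injective (h.trans hg_ιp3.symm))
            have e4 : ψ2 z ≠ ι (M'.σ p4) := fun h => h4 (ψ2.injective (h.trans hg_σq4.symm))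
            rw [hφT_apply2, swne _ _ _ e1 e2, swne _ _ _ e3 e4]
          have hx01 : ι (M'.σ p2) ≠ ι p1 := hιP _ _ h12
          have hx02 : ι (M'.σ p2) ≠ M.σ q2 := hιne _ _ hsq2S
          have hx03 : ι (M'.σ p2) ≠ ι p3 := hιP _ _ h32
          have hx04 : ι (M'.σ p2) ≠ M.σ q4 := hιne _ _ hsq4S
          have hord : 2 ≤ orderOf ψ2 := by
            by_contra hlt
            push_neg at hlt
            have hpos := orderOf_pos ψ2
            have h1 : orderOf ψ2 = 1 := by omega
            have h2 : ψ2 = 1 := orderOf_eq_one_iff.mp h1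
            have h3 := hg_σq2
            rw [h2] at h3
            simp only [Equiv.Perm.one_apply] at h3
            exact hιne (M'.σ p2) _ hsq2S h3.symm
          have hexQ : ∃ n, 0 < n ∧ ((ψ2 ^ n) (ι (M'.σ p2)) = ι p1 ∨
              (ψ2 ^ n) (ι (M'.σ p2)) = M.σ q2 ∨ (ψ2 ^ n) (ι (M'.σ p2)) = ι p3 ∨
              (ψ2 ^ n) (ι (M'.σ p2)) = M.σ q4) := by
            refine ⟨orderOf ψ2 - 1, by omega, Or.inr (Or.inl ?_)⟩
            have h1 : (ψ2 ^ (orderOf ψ2 - 1)) (ι (M'.σ p2)) =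
                (ψ2 ^ (orderOf ψ2 - 1)) (ψ2 (M.σ q2)) := by rw [hg_σq2]
            rw [h1, ← Equiv.Perm.mul_apply, ← pow_succ,
              Nat.sub_add_cancel (by omega : 1 ≤ orderOf ψ2), pow_orderOf_eq_one]
            rfl
          have hWspec := Nat.find_spec hexQ
          have hiter : (φT ^ (Nat.find hexQ)) (ι (M'.σ p2)) =
              (ψ2 ^ (Nat.find hexQ)) (ι (M'.σ p2)) := by
            apply QuadRed.pow_agree
            intro j hj
            rcases Nat.eq_zero_or_pos j with h0 | h0
            · subst h0
              simp only [pow_zero, Equiv.Perm.one_apply]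
              exact hagree _ hx01 hx02 hx03 hx04
            · have hmin := Nat.find_min hexQ hj
              simp only [not_and, not_or] at hmin
              obtain ⟨m1, m2, m3, m4⟩ := hmin h0
              exact hagree _ m1 m2 m3 m4
          have hscφT : φT.SameCycle (ι (M'.σ p2)) ((ψ2 ^ (Nat.find hexQ)) (ι (M'.σ p2))) :=
            QuadRed.sc_pow.mpr ⟨Nat.find hexQ, hiter⟩
          have hsc0 : φT.SameCycle (ι p1) (ι (M'.σ p2)) := by
            have h := QuadRed.sc_apply_self (f := φT) (ι p1)
            rwa [hφT_ι p1, hφ'p1] at h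
          have t1 : φT (M.σ q2) = M.α q4 := by
            rw [hφT_apply2, hg_σq2, Equiv.swap_apply_right (M.α q4) (ι (M'.σ p2)),
              swne _ _ _ (Ne.symm nd_5_7) (hιne (M'.σ p4) _ haq4S).symm]
          have t2 : φT (M.α q4) = M.σ q4 := by
            rw [hφT_apply2, hg_αq4,
              swne _ _ _ (Ne.symm nd_7_11) (hιne (M'.σ p2) _ hsq4S).symm,
              swne _ _ _ (Ne.symm nd_5_11) (hιne (M'.σ p4) _ hsq4S).symm]
          have t3 : φT (M.σ q4) = M.α q2 := by
            rw [hφT_apply2, hg_σq4,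
              swne _ _ _ (hιne (M'.σ p4) _ haq4S) (hιP _ _ (hσ'P _ _ hP24.symm)),
              Equiv.swap_apply_right (M.α q2) (ι (M'.σ p4))]
          have t4 : φT (M.α q2) = M.σ q2 := by
            rw [hφT_apply2, hg_αq2,
              swne _ _ _ (Ne.symm nd_7_9) (hιne (M'.σ p2) _ hsq2S).symm,
              swne _ _ _ (Ne.symm nd_5_9) (hιne (M'.σ p4) _ hsq2S).symm]
          have hgon : ∀ n : ℕ, (φT ^ n) (M.σ q2) = M.σ q2 ∨ (φT ^ n) (M.σ q2) = M.α q4 ∨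
              (φT ^ n) (M.σ q2) = M.σ q4 ∨ (φT ^ n) (M.σ q2) = M.α q2 := by
            intro n
            induction n with
            | zero => left; simp
            | succ n ih =>
              rw [QuadRed.pow_succ_apply]
              rcases ih with h | h | h | h
              · rw [h, t1]; exact Or.inr (Or.inl rfl)
              · rw [h, t2]; exact Or.inr (Or.inr (Or.inl rfl))
              · rw [h, t3]; exact Or.inr (Or.inr (Or.inr rfl))
              · rw [h, t4]; exact Or.inl rfl
          have hgonx : ¬ φT.SameCycle (M.σ q2) (ι (M'.σ p2)) := by
            intro h
            obtain ⟨n, hn⟩ := QuadRed.sc_pow.mp h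
            rcases hgon n with h' | h' | h' | h' <;> rw [hn] at h'
            · exact hιne (M'.σ p2) _ hsq2S h'
            · exact hιne (M'.σ p2) _ haq4S h'
            · exact hιne (M'.σ p2) _ hsq4S h'
            · exact hιne (M'.σ p2) _ haq2S h'
          rcases hWspec.2 with hw | hw | hw | hw
          · exfalso
            have hsx : ψ2.SameCycle (ι (M'.σ p2)) (ι p1) :=
              QuadRed.sc_pow.mpr ⟨Nat.find hexQ, hw⟩
            have h1 : ψ2.SameCycle (ι p1) (M.α q4) := by
              have h := QuadRed.sc_apply_self (f := ψ2) (ι p1)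
              rwa [hg_ιp1] at h
            exact hb (h1.symm.trans hsx.symm)
          · exfalso
            rw [hw] at hscφT
            exact hgonx hscφT.symm
          · rw [hw] at hscφT
            have hscT : φT.SameCycle (ι p1) (ι p3) := hsc0.trans hscφT
            have htrans : ∀ (n : ℕ) (e' : M'.D), (φT ^ n) (ι e') = ι ((M'.φ ^ n) e') := by
              intro n
              induction n with
              | zero => intro e'; simp
              | succ n ih =>
                intro e'
                rw [QuadRed.pow_succ_apply, QuadRed.pow_succ_apply, ih, hφT_ι]
            obtain ⟨n, hn⟩ := QuadRed.sc_pow.mp hscT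
            rw [htrans] at hn
            exact QuadRed.sc_pow.mpr ⟨n, hι hn⟩
          · exfalso
            rw [hw] at hscφT
            have hsc24 : φT.SameCycle (M.σ q2) (M.σ q4) := by
              have h := (QuadRed.sc_apply_self (f := φT) (M.σ q2)).trans
                (QuadRed.sc_apply_self (f := φT) _)
              rwa [t1, t2] at h
            exact hgonx (hsc24.trans hscφT.symm)
    have h13 : c' p1 = c' p3 := QuadRed.color_const M'.φ c' hcol.1 hsc13
    exact QuadRed.extendColoring M M' hcub q1 q2 q3 q4 hf1 hf2 hf3 hf4 S hS hScard ι hι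
      hrange hσ p1 p2 p3 p4 hp1 hp2 hp3 hp4 hα hα12 hα34 c' hcol h13
  · -- different components : permute colors on the component of p3
    set c'' : M'.D → Fin 4 := fun e =>
      if QuadRed.Rch M'.σ M'.α e p3 then (Equiv.swap (c' p1) (c' p3)) (c' e) else c' e
      with hc''def
    have hmoveφ : ∀ e, QuadRed.Rch M'.σ M'.α e (M'.φ e) := fun e => QuadRed.rch_phi _ _ e
    have hmoveα : ∀ e, QuadRed.Rch M'.σ M'.α e (M'.α e) :=
      fun e => Relation.ReflTransGen.single (Or.inr rfl)
    have hclassφ : ∀ e, QuadRed.Rch M'.σ M'.α (M'.φ e) p3 ↔ QuadRed.Rch M'.σ M'.α e p3 := by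
      intro e
      constructor
      · exact fun h => Relation.ReflTransGen.trans (hmoveφ e) h
      · exact fun h => Relation.ReflTransGen.trans (QuadRed.rch_symm (hmoveφ e)) h
    have hclassα : ∀ e, QuadRed.Rch M'.σ M'.α (M'.α e) p3 ↔ QuadRed.Rch M'.σ M'.α e p3 := by
      intro e
      constructor
      · exact fun h => Relation.ReflTransGen.trans (hmoveα e) h
      · exact fun h => Relation.ReflTransGen.trans (QuadRed.rch_symm (hmoveα e)) h
    have hcol'' : M'.FaceColoring 4 c'' := by
      constructor
      · intro e
        simp only [hc''def]
        by_cases he : QuadRed.Rch M'.σ M'.α e p3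
        · rw [if_pos ((hclassφ e).mpr he), if_pos he, hcol.1 e]
        · rw [if_neg (fun hh => he ((hclassφ e).mp hh)), if_neg he, hcol.1 e]
      · intro e
        simp only [hc''def]
        by_cases he : QuadRed.Rch M'.σ M'.α e p3
        · rw [if_pos he, if_pos ((hclassα e).mpr he)]
          exact fun hh => (hcol.2 e) ((Equiv.swap (c' p1) (c' p3)).injective hh)
        · rw [if_neg he, if_neg (fun hh => he ((hclassα e).mp hh))]
          exact hcol.2 e
    have h13'' : c'' p1 = c'' p3 := by
      have hrefl : QuadRed.Rch M'.σ M'.α p3 p3 := Relation.ReflTransGen.refl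
      simp only [hc''def]
      rw [if_neg hpc, if_pos hrefl, Equiv.swap_apply_right]
    exact QuadRed.extendColoring M M' hcub q1 q2 q3 q4 hf1 hf2 hf3 hf4 S hS hScard ι hι
      hrange hσ p1 p2 p3 p4 hp1 hp2 hp3 hp4 hα hα12 hα34 c'' hcol'' h13''
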